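/- arXiv:1806.09142 — 10 statements merged into one kernel-verified Lean document; each statement's English description precedes it below -/
import Mathlib

section
/- For any positive integer n and non-negative integer l with l ≤ n, we have 2·∑_{k=l+1}^{n} (-1)^k · C(n,k)/C(n+k,k) = ((-1)^{l+1}/n) · (n-l)·C(n,l)/C(n+l,l). -/
lemma aux0 (n : ℕ) (hn : 0 < n) : ∀ d l : ℕ, l + d = n →
    2 * ∑ k ∈ Finset.Icc (l + 1) n,
        (-1 : ℝ) ^ k * (n.choose k) / ((n + k).choose k)
      = ((-1 : ℝ) ^ (l + 1) / n) * (((n : ℝ) - l) * (n.choose l) / ((n + l).choose l)) := by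
  intro d
  induction d with
  | zero =>
    intro l h
    simp only [Nat.add_zero] at h
    subst h
    rw [Finset.Icc_eq_empty (by omega)]
    simp
  | succ d ih =>
    intro l h
    have hln : l + 1 ≤ n := by omega
    have IH := ih (l + 1) (by omega)
    have hsplit : Finset.Icc (l + 1) n = insert (l + 1) (Finset.Icc (l + 2) n) := by
      ext x; simp; omega
    rw [hsplit, Finset.sum_insert (by simp)]
    have h1 : ((n.choose (l+1) : ℝ)) * (l + 1) = (n.choose l) * ((n : ℝ) - l) := by
      have hc := congrArg (Nat.cast (R := ℝ)) (Nat.choose_succ_right_eq n l)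
      push_cast [Nat.cast_sub (show l ≤ n by omega)] at hc
      linarith
    have h2 : ((n : ℝ) + l + 1) * ((n + l).choose l) = ((n + l + 1).choose (l+1)) * (l + 1) := by
      have hc := congrArg (Nat.cast (R := ℝ)) (Nat.add_one_mul_choose_eq (n + l) l)
      push_cast [Nat.succ_eq_add_one] at hc
      linarith
    have hc1 : (((n + l).choose l : ℝ)) ≠ 0 := by exact Nat.cast_ne_zero.mpr (Nat.choose_pos (by omega)).ne'
    have hc2 : (((n + l + 1).choose (l+1) : ℝ)) ≠ 0 := by exact Nat.cast_ne_zero.mpr (Nat.choose_pos (by omega)).ne'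
    have hn0 : (n : ℝ) ≠ 0 := by positivity
    have hrw : ((n + (l + 1)).choose (l + 1) : ℝ) = ((n + l + 1).choose (l+1) : ℝ) := by
      norm_num [Nat.add_assoc]
    rw [mul_add, IH]
    rw [show ((n:ℝ) - (l+1 : ℕ)) = (n : ℝ) - l - 1 by push_cast; ring]
    rw [hrw]
    rw [show ((-1 : ℝ)) ^ (l + 1 + 1) = -(-1 : ℝ)^(l+1) by ring]
    field_simp
    linear_combination ((n.choose (l+1) : ℕ) : ℝ) * h2 + (((n+l+1).choose (l+1) : ℕ) : ℝ) * h1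

theorem stmt0 (n l : ℕ) (hn : 0 < n) (hl : l ≤ n) :
    2 * ∑ k ∈ Finset.Icc (l + 1) n,
        (-1 : ℝ) ^ k * (n.choose k) / ((n + k).choose k)
      = ((-1 : ℝ) ^ (l + 1) / n) * (((n : ℝ) - l) * (n.choose l) / ((n + l).choose l)) := by
  exact aux0 n hn (n - l) l (by omega)
end

section
/- For any positive integer n and non-negative integer l with l ≤ n, we have 2·∑_{k=l+1}^{n} k·C(n,k)/C(n+k,k) = (n-l)·C(n,l)/C(n+l,l). -/
lemma key_step (n j : ℕ) (hj : j < n) :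
    ((n : ℝ) - j) * (n.choose j) / ((n + j).choose j)
      - ((n : ℝ) - (j + 1)) * (n.choose (j + 1)) / ((n + (j + 1)).choose (j + 1))
      = 2 * ((j : ℝ) + 1) * (n.choose (j + 1)) / ((n + (j + 1)).choose (j + 1)) := by
  have hd1 : ((n + j).choose j : ℝ) ≠ 0 :=
    Nat.cast_ne_zero.2 (Nat.choose_pos (Nat.le_add_left j n)).ne'
  have hd2 : ((n + (j + 1)).choose (j + 1) : ℝ) ≠ 0 :=
    Nat.cast_ne_zero.2 (Nat.choose_pos (Nat.le_add_left (j + 1) n)).ne'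
  have h1 : ((n.choose (j + 1)) : ℝ) * (j + 1) = (n.choose j) * ((n : ℝ) - j) := by
    have := Nat.choose_succ_right_eq n j
    have h := congrArg (fun x : ℕ => (x : ℝ)) this
    push_cast [Nat.cast_sub hj.le] at h
    linarith [h]
  have h2 : (((n + (j + 1)).choose (j + 1)) : ℝ) * (j + 1)
      = ((n : ℝ) + j + 1) * ((n + j).choose j) := by
    have h := Nat.add_one_mul_choose_eq (n + j) j
    exact_mod_cast h.symm
  field_simp
  linear_combination (-(((n + (j + 1)).choose (j + 1) : ℝ))) * h1
    + ((n.choose (j + 1) : ℝ)) * h2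

theorem stmt1 (n l : ℕ) (hn : 0 < n) (hl : l ≤ n) :
    2 * ∑ k ∈ Finset.Icc (l + 1) n, (k : ℝ) * (n.choose k) / ((n + k).choose k)
      = ((n : ℝ) - l) * (n.choose l) / ((n + l).choose l) := by
  set g : ℕ → ℝ := fun k => ((n : ℝ) - k) * (n.choose k) / ((n + k).choose k) with hg
  have aux : ∀ m, l ≤ m → m ≤ n →
      ∑ k ∈ Finset.Icc (l + 1) m, 2 * (k : ℝ) * (n.choose k) / ((n + k).choose k)
        = g l - g m := by
    intro m
    induction m with
    | zero => intro h1 h2; interval_cases l; simp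
    | succ m ih =>
      intro h1 h2
      rcases Nat.eq_or_lt_of_le h1 with h | h
      · rw [← h]
        simp
      · have hlm : l ≤ m := Nat.lt_succ_iff.mp h
        rw [Finset.sum_Icc_succ_top (by omega), ih hlm (by omega)]
        have := key_step n m (by omega)
        simp only [hg]
        push_cast
        push_cast at this
        linarith [this]
  rw [Finset.mul_sum]
  have : ∑ k ∈ Finset.Icc (l + 1) n, 2 * ((k : ℝ) * (n.choose k) / ((n + k).choose k))
      = ∑ k ∈ Finset.Icc (l + 1) n, 2 * (k : ℝ) * (n.choose k) / ((n + k).choose k) := by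
    apply Finset.sum_congr rfl; intro k _; ring
  rw [this, aux n hl le_rfl]
  simp [hg]
end

section
/- For any integer n ≥ 2, we have ∑_{k=1}^{n} (-1)^k · k² · C(n,k)/C(n+k,k) = 0. -/
theorem stmt2 (n : ℕ) (hn : 2 ≤ n) :
    ∑ k ∈ Finset.Icc 1 n, (-1 : ℝ) ^ k * (k : ℝ) ^ 2 * (n.choose k) / ((n + k).choose k) = 0 := by
  set g : ℕ → ℝ := fun k =>
    (-1 : ℝ) ^ (k + 1) * ((k : ℝ) * ((k : ℝ) - 1) * ((k : ℝ) + n)) * (n.choose k) /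
      (2 * ((n : ℝ) - 1) * ((n + k).choose k)) with hg
  have hn2 : (2 : ℝ) ≤ (n : ℝ) := by exact_mod_cast hn
  have hn1 : ((n : ℝ) - 1) ≠ 0 := by nlinarith
  have key : ∀ k ∈ Finset.Icc 1 n,
      (-1 : ℝ) ^ k * (k : ℝ) ^ 2 * (n.choose k) / ((n + k).choose k) = g (k + 1) - g k := by
    intro k hk
    simp only [Finset.mem_Icc] at hk
    obtain ⟨hk1, hkn⟩ := hk
    have hB : (0 : ℝ) < ((n + k).choose k : ℝ) := by
      exact_mod_cast Nat.choose_pos (Nat.le_add_left k n)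
    have hB' : (0 : ℝ) < ((n + (k + 1)).choose (k + 1) : ℝ) := by
      exact_mod_cast Nat.choose_pos (Nat.le_add_left (k + 1) n)
    have hA : (n.choose (k + 1) : ℝ) * ((k : ℝ) + 1) = (n.choose k : ℝ) * ((n : ℝ) - k) := by
      have h := Nat.choose_succ_right_eq n k
      have hcast : ((n - k : ℕ) : ℝ) = (n : ℝ) - k := by rw [Nat.cast_sub hkn]
      have h2 : (n.choose (k + 1) : ℝ) * ((k + 1 : ℕ) : ℝ)
          = (n.choose k : ℝ) * ((n - k : ℕ) : ℝ) := by exact_mod_cast h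
      rw [hcast] at h2
      push_cast at h2
      linarith
    have hB2 : ((n + (k + 1)).choose (k + 1) : ℝ) * ((k : ℝ) + 1) =
        ((n + k).choose k : ℝ) * ((n : ℝ) + k + 1) := by
      have h := Nat.add_one_mul_choose_eq (n + k) k
      have h2 : ((n + k + 1 : ℕ) : ℝ) * ((n + k).choose k : ℝ)
          = (((n + k + 1).choose (k + 1)) : ℝ) * ((k + 1 : ℕ) : ℝ) := by exact_mod_cast h
      push_cast at h2
      have hidx : n + (k + 1) = (n + k) + 1 := by ring
      rw [hidx]
      linarith
    have hA' : (n.choose (k + 1) : ℝ) = (n.choose k : ℝ) * ((n : ℝ) - k) / ((k : ℝ) + 1) := by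
      rw [eq_div_iff (by positivity)]; exact hA
    have hB2' : ((n + (k + 1)).choose (k + 1) : ℝ)
        = ((n + k).choose k : ℝ) * ((n : ℝ) + k + 1) / ((k : ℝ) + 1) := by
      rw [eq_div_iff (by positivity)]; exact hB2
    simp only [hg]
    push_cast
    rw [hA', hB2']
    have hBne : ((n + k).choose k : ℝ) ≠ 0 := ne_of_gt hB
    have hnk : ((n : ℝ) + k + 1) ≠ 0 := by positivity
    have hkne : ((k : ℝ) + 1) ≠ 0 := by positivity
    field_simp
    ring
  rw [Finset.sum_congr rfl key]
  have htel : ∀ m : ℕ, ∑ k ∈ Finset.Icc 1 m, (g (k + 1) - g k) = g (m + 1) - g 1 := by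
    intro m
    induction m with
    | zero => simp
    | succ m ih =>
      rw [Finset.sum_Icc_succ_top (by omega), ih]
      ring
  rw [htel n]
  have hg1 : g 1 = 0 := by simp [hg]
  have hgn : g (n + 1) = 0 := by
    simp only [hg]
    rw [Nat.choose_eq_zero_of_lt (by omega)]
    simp
  rw [hg1, hgn, sub_zero]
end

section
/- For any positive integers n and l with l ≤ n, we have ∑_{k=l}^{n} k·C(n,k)·2^{Δ(k,l)}/C(n+k,k) = n·C(n,l)/C(n+l,l), where Δ(a,b) = 0 if a = b and Δ(a,b) = 1 otherwise. -/
def Δ (a b : ℕ) : ℕ := if a = b then 0 else 1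

theorem stmt3 (n l : ℕ) (hn : 0 < n) (hl : 0 < l) (hln : l ≤ n) :
    ∑ k ∈ Finset.Icc l n, (k : ℝ) * (n.choose k) * 2 ^ Δ k l / ((n + k).choose k)
      = (n : ℝ) * (n.choose l) / ((n + l).choose l) := by
  have main : ∀ d l, 0 < l → l + d = n →
      ∑ k ∈ Finset.Icc l n, (k : ℝ) * (n.choose k) * 2 ^ Δ k l / ((n + k).choose k)
        = (n : ℝ) * (n.choose l) / ((n + l).choose l) := by
    intro d
    induction d with
    | zero =>
      intro l hl hld
      have : l = n := by omega
      subst this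
      simp [Δ]
    | succ d ih =>
      intro l hl hld
      have hIH := ih (l + 1) (by omega) (by omega)
      have hsplit : Finset.Icc l n = insert l (Finset.Icc (l+1) n) := by
        ext x; simp [Finset.mem_Icc, Finset.mem_insert]; omega
      have hsplit2 : Finset.Icc (l+1) n = insert (l+1) (Finset.Icc (l+2) n) := by
        ext x; simp [Finset.mem_Icc, Finset.mem_insert]; omega
      have hmem : l ∉ Finset.Icc (l+1) n := by simp
      have hmem2 : l+1 ∉ Finset.Icc (l+2) n := by simp
      rw [hsplit, Finset.sum_insert hmem]
      rw [hsplit2, Finset.sum_insert hmem2] at hIH ⊢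
      have htail : ∀ x ∈ Finset.Icc (l+2) n,
          (x : ℝ) * (n.choose x) * 2 ^ Δ x l / ((n + x).choose x)
            = (x : ℝ) * (n.choose x) * 2 ^ Δ x (l+1) / ((n + x).choose x) := by
        intro x hx
        simp only [Finset.mem_Icc] at hx
        have h1 : Δ x l = 1 := by simp only [Δ, if_neg (by omega : ¬ x = l)]
        have h2 : Δ x (l+1) = 1 := by simp only [Δ, if_neg (by omega : ¬ x = l+1)]
        rw [h1, h2]
      rw [Finset.sum_congr rfl htail]
      have hΔ0 : Δ l l = 0 := by simp [Δ]
      have hΔ1 : Δ (l+1) l = 1 := by simp [Δ]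
      have hΔ2 : Δ (l+1) (l+1) = 0 := by simp [Δ]
      rw [hΔ0, hΔ1]
      rw [hΔ2] at hIH
      have hD0 : (0:ℝ) < ((n + l).choose l : ℝ) := by
        exact_mod_cast Nat.choose_pos (by omega)
      have hD1 : (0:ℝ) < ((n + l + 1).choose (l+1) : ℝ) := by
        exact_mod_cast Nat.choose_pos (by omega)
      have hA : ((n + l + 1).choose (l + 1) : ℝ) * (l + 1) = (n + l + 1) * ((n + l).choose l) := by
        have h := (Nat.add_one_mul_choose_eq (n + l) l).symm
        have h' : (n + l + 1).choose (l + 1) * (l + 1) = (n + l + 1) * (n + l).choose l := by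
          simpa [Nat.succ_eq_add_one] using h
        exact_mod_cast h'
      have hB : ((n.choose (l+1)) : ℝ) * (l + 1) = (n.choose l) * (d + 1) := by
        have h := Nat.choose_succ_right_eq n l
        have hnl : n - l = d + 1 := by omega
        rw [hnl] at h
        exact_mod_cast h
      have hn' : (n:ℝ) = l + (d+1) := by exact_mod_cast congrArg (Nat.cast : ℕ → ℝ) hld.symm
      have hkey : (l : ℝ) * (n.choose l) / ((n + l).choose l)
          + ((l:ℝ)+1) * (n.choose (l+1)) / ((n + l + 1).choose (l+1))
          + (n : ℝ) * (n.choose (l+1)) / ((n + l + 1).choose (l+1))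
          = (n : ℝ) * (n.choose l) / ((n + l).choose l) := by
        rw [add_assoc, ← add_div, div_add_div _ _ hD0.ne' hD1.ne',
          div_eq_div_iff (by positivity) hD0.ne']
        linear_combination (-((n+l).choose l : ℝ)) * ((n.choose (l+1) : ℝ) * hA
          - (((n+l+1).choose (l+1) : ℝ)) * hB
          - ((n.choose l : ℝ)) * (((n+l+1).choose (l+1) : ℝ)) * hn')
          - 2*((n.choose l : ℝ))*(((n+l+1).choose (l+1)) : ℝ)*(((n+l).choose l) : ℝ)*hn'
      have hcast : ((n + (l+1)).choose (l+1) : ℝ) = ((n + l + 1).choose (l+1) : ℝ) := by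
        norm_num [add_assoc]
      rw [hcast] at hIH
      simp only [pow_zero, pow_one, mul_one] at hIH ⊢
      push_cast at hIH ⊢
      rw [hcast]
      have h2 : ((l:ℝ)+1) * (n.choose (l+1)) * 2 / ((n + l + 1).choose (l+1))
          = 2 * (((l:ℝ)+1) * (n.choose (l+1)) / ((n + l + 1).choose (l+1))) := by ring
      linarith [hIH, hkey, h2]
  exact main (n - l) l hl (by omega)
end

section
/- For any positive integers n and l with l ≤ n, we have ∑_{k=l}^{n} (-1)^k · C(n,k) · 2^{Δ(k,l)}/C(n+k,k) = ((-1)^l / n) · l·C(n,l)/C(n+l,l), where Δ(a,b) = 0 if a = b and 1 otherwise. -/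
lemma aux (n : ℕ) (hn : 0 < n) : ∀ d l : ℕ, l + d = n → 0 < l →
    ∑ k ∈ Finset.Icc l n, (-1 : ℝ) ^ k * (n.choose k) / ((n + k).choose k)
      = (-1 : ℝ) ^ l * (n + l) * (n.choose l) / (2 * n * ((n + l).choose l)) := by
  intro d
  induction d with
  | zero =>
    intro l hd hl
    subst hd
    simp only [Nat.add_zero] at *
    rw [Finset.Icc_self, Finset.sum_singleton]
    have hD : ((l + l).choose l : ℝ) ≠ 0 := by
      exact_mod_cast (Nat.choose_pos (by omega)).ne'
    have hl' : (l : ℝ) ≠ 0 := by positivity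
    field_simp
    ring
  | succ d ih =>
    intro l hd hl
    have hln : l < n := by omega
    have hstep : Finset.Icc l n = Finset.cons l (Finset.Icc (l+1) n) (by simp) := by
      rw [Finset.cons_eq_insert, Finset.Icc_add_one_left_eq_Ioc, Finset.Ioc_insert_left hln.le]
    rw [hstep, Finset.sum_cons, ih (l+1) (by omega) (by omega)]
    have hl1 : ((l : ℝ) + 1) ≠ 0 := by positivity
    have hB : (n.choose (l+1) : ℝ) = (n.choose l : ℝ) * (n - l) / (l + 1) := by
      have e1 := Nat.choose_succ_right_eq n l
      have hc : ((n.choose (l+1) * (l+1) : ℕ) : ℝ) = ((n.choose l * (n - l) : ℕ) : ℝ) := by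
        exact_mod_cast congrArg (fun x : ℕ => (x : ℝ)) e1
      push_cast [Nat.cast_sub hln.le] at hc
      field_simp
      linarith
    have hE : ((n + (l+1)).choose (l+1) : ℝ) = ((n:ℝ) + l + 1) * ((n + l).choose l : ℝ) / (l + 1) := by
      have e2 := Nat.add_one_mul_choose_eq (n + l) l
      have hc : (((n+l).succ * (n+l).choose l : ℕ) : ℝ) = (((n+l).succ.choose l.succ * l.succ : ℕ) : ℝ) := by
        exact_mod_cast congrArg (fun x : ℕ => (x : ℝ)) e2
      push_cast at hc
      rw [show n + (l+1) = n + l + 1 by omega]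
      field_simp
      linarith
    rw [hB, hE]
    have hD : ((n + l).choose l : ℝ) ≠ 0 := by
      exact_mod_cast (Nat.choose_pos (by omega)).ne'
    have hn' : (n : ℝ) ≠ 0 := by positivity
    have hnl1 : ((n:ℝ) + l + 1) ≠ 0 := by positivity
    rw [pow_succ]
    push_cast
    field_simp
    ring

theorem stmt4 (n l : ℕ) (hn : 0 < n) (hl : 0 < l) (hln : l ≤ n) :
    ∑ k ∈ Finset.Icc l n, (-1 : ℝ) ^ k * (n.choose k) * 2 ^ Δ k l / ((n + k).choose k)
      = ((-1 : ℝ) ^ l / n) * ((l : ℝ) * (n.choose l) / ((n + l).choose l)) := by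
  have hsplit : ∀ k ∈ Finset.Icc l n,
      (-1 : ℝ) ^ k * (n.choose k) * 2 ^ Δ k l / ((n + k).choose k)
        = 2 * ((-1 : ℝ) ^ k * (n.choose k) / ((n + k).choose k))
          - (if k = l then (-1 : ℝ) ^ l * (n.choose l) / ((n + l).choose l) else 0) := by
    intro k _
    by_cases h : k = l
    · subst h; simp [Δ]; ring
    · simp [Δ, h]; ring
  rw [Finset.sum_congr rfl hsplit, Finset.sum_sub_distrib,
    Finset.sum_ite_eq' (Finset.Icc l n) l, if_pos (by simp [hln]), ← Finset.mul_sum,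
    aux n hn (n - l) l (by omega) hl]
  have hD : ((n + l).choose l : ℝ) ≠ 0 := by
    exact_mod_cast (Nat.choose_pos (by omega)).ne'
  have hn' : (n : ℝ) ≠ 0 := by positivity
  field_simp
  ring
end

section
/- For any positive integers n, l with l ≤ n and any non-negative integer c, we have ∑_{k=l}^{n} (-1)^k · C(n,k)/C(n+k,k) · S♯_{k,l}({1}^c) = ((-1)^l / n^{c+1}) · l·C(n,l)/C(n+l,l). -/
noncomputable def Hstar : ℕ → List ℕ → ℝ
  | _, [] => 1
  | n, s :: rest => ∑ k ∈ Finset.Icc 1 n, (1 / (k : ℝ) ^ s) * Hstar k rest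

noncomputable def zetaStar : List ℕ → ℝ
  | [] => 1
  | s :: rest => ∑' k : ℕ+, (1 / (k : ℝ) ^ s) * Hstar k rest

noncomputable def Ssharp (k l : ℕ) : ℕ → ℝ
  | 0 => 2 ^ Δ k l
  | c + 1 => ∑ j ∈ Finset.Icc l k, (2 ^ Δ k j / (j : ℝ)) * Ssharp j l c

open Finset in
lemma Gsum (n : ℕ) (hn : 0 < n) : ∀ d l, 0 < l → l ≤ n → n - l = d →
    (∑ k ∈ Icc l n, (-1:ℝ)^k * (n.choose k)/((n+k).choose k))
      = (-1:ℝ)^l * (n.choose l) * (n+l) / (2*n*((n+l).choose l)) := by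
  intro d
  induction d with
  | zero =>
    intro l hl hln hd
    have hle : l = n := by omega
    subst hle
    rw [Finset.Icc_self, Finset.sum_singleton]
    have hB : ((l+l).choose l : ℝ) ≠ 0 := by
      exact_mod_cast (Nat.choose_pos (by omega)).ne'
    have hl' : (l:ℝ) ≠ 0 := by exact_mod_cast hl.ne'
    field_simp
    ring
  | succ d ih =>
    intro l hl hln hd
    have hlt : l < n := by omega
    rw [← Finset.Ioc_insert_left hln, Finset.sum_insert (by simp),
      ← Finset.Icc_add_one_left_eq_Ioc, ih (l+1) (by omega) (by omega) (by omega)]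
    have hidx : n + (l+1) = n + l + 1 := by omega
    rw [hidx]
    have hB : ((n+l).choose l : ℝ) ≠ 0 := by
      exact_mod_cast (Nat.choose_pos (by omega)).ne'
    have hB' : ((n+l+1).choose (l+1) : ℝ) ≠ 0 := by
      exact_mod_cast (Nat.choose_pos (by omega : l+1 ≤ n+l+1)).ne'
    have hn' : (n:ℝ) ≠ 0 := by exact_mod_cast hn.ne'
    have hl1 : ((l:ℝ)+1) ≠ 0 := by positivity
    have hnl1 : ((n:ℝ)+l+1) ≠ 0 := by positivity
    have c1 : (n.choose (l+1) : ℝ) * ((l:ℝ)+1) = (n.choose l : ℝ) * (((n - l : ℕ)) : ℝ) := by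
      exact_mod_cast Nat.choose_succ_right_eq n l
    rw [Nat.cast_sub hln] at c1
    have c2 : ((n:ℝ)+l+1) * ((n+l).choose l : ℝ) = ((n+l+1).choose (l+1) : ℝ) * ((l:ℝ)+1) := by
      exact_mod_cast Nat.add_one_mul_choose_eq (n+l) l
    have e1 : (n.choose (l+1):ℝ) = (n.choose l : ℝ) * ((n:ℝ)-l)/((l:ℝ)+1) := by
      field_simp; linarith [c1]
    have e2 : ((n+l+1).choose (l+1):ℝ) = ((n:ℝ)+l+1) * ((n+l).choose l : ℝ)/((l:ℝ)+1) := by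
      field_simp; linarith [c2]
    rw [e1, e2]
    push_cast
    field_simp
    ring

open Finset in
lemma sharp2 (n j : ℕ) (hn : 0 < n) (hj : 0 < j) (hjn : j ≤ n) :
    ∑ k ∈ Icc j n, (-1:ℝ)^k * (n.choose k)/((n+k).choose k) * 2^(Δ k j)
      = (-1:ℝ)^j * (n.choose j) * j / (n * ((n+j).choose j)) := by
  have key : ∀ k ∈ Icc j n, (-1:ℝ)^k * (n.choose k)/((n+k).choose k) * 2^(Δ k j)
      = 2 * ((-1:ℝ)^k * (n.choose k)/((n+k).choose k))
        - (if k = j then (-1:ℝ)^k * (n.choose k)/((n+k).choose k) else 0) := by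
    intro k _
    by_cases h : k = j <;> simp [Δ, h] <;> ring
  rw [Finset.sum_congr rfl key, Finset.sum_sub_distrib, ← Finset.mul_sum,
    Finset.sum_ite_eq' _ j, if_pos (by simp [hjn]), Gsum n hn (n - j) j hj hjn rfl]
  have hB : ((n+j).choose j : ℝ) ≠ 0 := by
    exact_mod_cast (Nat.choose_pos (by omega)).ne'
  have hn' : (n:ℝ) ≠ 0 := by exact_mod_cast hn.ne'
  field_simp
  ring

open Finset in
lemma swap_tri (l n : ℕ) (f : ℕ → ℕ → ℝ) :
    ∑ k ∈ Icc l n, ∑ j ∈ Icc l k, f k j = ∑ j ∈ Icc l n, ∑ k ∈ Icc j n, f k j := by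
  have h1 : ∀ k ∈ Icc l n, ∑ j ∈ Icc l k, f k j
      = ∑ j ∈ Icc l n, if j ≤ k then f k j else 0 := by
    intro k hk
    rw [← Finset.sum_filter]
    congr 1
    ext j
    simp only [Finset.mem_filter, Finset.mem_Icc] at *
    omega
  have h2 : ∀ j ∈ Icc l n, ∑ k ∈ Icc j n, f k j
      = ∑ k ∈ Icc l n, if j ≤ k then f k j else 0 := by
    intro j hj
    rw [← Finset.sum_filter]
    congr 1
    ext k
    simp only [Finset.mem_filter, Finset.mem_Icc] at *
    omega
  rw [Finset.sum_congr rfl h1, Finset.sum_congr rfl h2, Finset.sum_comm]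

open Finset in
theorem stmt5 (n l c : ℕ) (hn : 0 < n) (hl : 0 < l) (hln : l ≤ n) :
    ∑ k ∈ Finset.Icc l n,
        (-1 : ℝ) ^ k * (n.choose k) / ((n + k).choose k) * Ssharp k l c
      = ((-1 : ℝ) ^ l / (n : ℝ) ^ (c + 1)) * ((l : ℝ) * (n.choose l) / ((n + l).choose l)) := by
  have hB : ((n+l).choose l : ℝ) ≠ 0 := by
    exact_mod_cast (Nat.choose_pos (by omega)).ne'
  have hn' : (n:ℝ) ≠ 0 := by exact_mod_cast hn.ne'
  induction c with
  | zero =>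
    simp only [Ssharp]
    rw [sharp2 n l hn hl hln]
    field_simp
    ring
  | succ c ih =>
    simp only [Ssharp]
    have step1 : ∀ k ∈ Icc l n,
        (-1 : ℝ) ^ k * (n.choose k) / ((n + k).choose k)
          * (∑ j ∈ Finset.Icc l k, (2 ^ Δ k j / (j : ℝ)) * Ssharp j l c)
        = ∑ j ∈ Icc l k,
            ((-1 : ℝ) ^ k * (n.choose k) / ((n + k).choose k) * 2^(Δ k j))
              * (Ssharp j l c / j) := by
      intro k _
      rw [Finset.mul_sum]
      exact Finset.sum_congr rfl (fun j _ => by ring)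
    rw [Finset.sum_congr rfl step1,
      swap_tri l n (fun k j => ((-1 : ℝ) ^ k * (n.choose k) / ((n + k).choose k) * 2^(Δ k j))
              * (Ssharp j l c / j))]
    have step2 : ∀ j ∈ Icc l n,
        (∑ k ∈ Icc j n, ((-1 : ℝ) ^ k * (n.choose k) / ((n + k).choose k) * 2^(Δ k j))
              * (Ssharp j l c / j))
        = (1/(n:ℝ)) * ((-1 : ℝ) ^ j * (n.choose j) / ((n + j).choose j) * Ssharp j l c) := by
      intro j hj
      simp only [Finset.mem_Icc] at hj
      rw [← Finset.sum_mul, sharp2 n j hn (by omega) hj.2]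
      have hj' : (j:ℝ) ≠ 0 := by exact_mod_cast (by omega : j ≠ 0)
      have hBj : ((n+j).choose j : ℝ) ≠ 0 := by
        exact_mod_cast (Nat.choose_pos (by omega)).ne'
      field_simp
    rw [Finset.sum_congr rfl step2, ← Finset.mul_sum, ih]
    rw [pow_succ]
    field_simp
    ring
end

section
/- Let M > 0, c, a be real numbers with a > 1, and let (R_k) be a sequence of real numbers satisfying |R_k| < M·(log k + 1)^c / k^a for all k ≥ 1. Then lim_{n→∞} ∑_{k=1}^{n} |R_k| · (1 - C(n,k)/C(n+k,k)) = 0. -/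
open Filter Finset Real Asymptotics

private lemma aux_ratio_tendsto (k : ℕ) :
    Filter.Tendsto (fun n : ℕ => (n.choose k : ℝ) / ((n + k).choose k))
      Filter.atTop (nhds 1) := by
  have hfac : ∀ i ∈ Finset.range k,
      Tendsto (fun n : ℕ => ((n : ℝ) - i) / ((n : ℝ) + k - i)) atTop (nhds 1) := by
    intro i hi
    have hik : (i : ℝ) < k := by exact_mod_cast Finset.mem_range.1 hi
    have hden : ∀ n : ℕ, (0 : ℝ) < (n : ℝ) + k - i := fun n => by
      have : (0 : ℝ) ≤ n := Nat.cast_nonneg n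
      linarith
    have h0 : Tendsto (fun n : ℕ => (k : ℝ) / ((n : ℝ) + k - i)) atTop (nhds 0) := by
      apply Tendsto.div_atTop tendsto_const_nhds
      exact (tendsto_atTop_add_const_right _ ((k : ℝ) - i)
        tendsto_natCast_atTop_atTop).congr (fun n => by ring)
    have hc1 : Tendsto (fun _ : ℕ => (1:ℝ)) atTop (nhds 1) := tendsto_const_nhds
    have h1 := hc1.sub h0
    rw [sub_zero] at h1
    apply h1.congr
    intro n
    have h := (hden n).ne'
    field_simp
    ring
  have hprod := tendsto_finset_prod (Finset.range k) hfac
  rw [Finset.prod_const_one] at hprod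
  apply hprod.congr'
  filter_upwards [eventually_ge_atTop k] with n hn
  have h1 : (n.descFactorial k : ℝ) = ∏ i ∈ Finset.range k, ((n : ℝ) - i) := by
    rw [Nat.descFactorial_eq_prod_range, Nat.cast_prod]
    refine Finset.prod_congr rfl fun i hi => ?_
    have hik : i ≤ n := le_trans (Finset.mem_range.1 hi).le hn
    rw [Nat.cast_sub hik]
  have h2 : ((n + k).descFactorial k : ℝ) = ∏ i ∈ Finset.range k, ((n : ℝ) + k - i) := by
    rw [Nat.descFactorial_eq_prod_range, Nat.cast_prod]
    refine Finset.prod_congr rfl fun i hi => ?_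
    have hik : i ≤ n + k := le_trans (Finset.mem_range.1 hi).le (Nat.le_add_left k n)
    rw [Nat.cast_sub hik]
    push_cast
    ring
  have hkfac : ((Nat.factorial k : ℕ) : ℝ) ≠ 0 := by exact_mod_cast k.factorial_ne_zero
  have key : (n.choose k : ℝ) / ((n + k).choose k)
      = (n.descFactorial k : ℝ) / ((n + k).descFactorial k) := by
    rw [Nat.descFactorial_eq_factorial_mul_choose, Nat.descFactorial_eq_factorial_mul_choose]
    push_cast
    rw [mul_div_mul_left _ _ hkfac]
  rw [Finset.prod_div_distrib, ← h1, ← h2, key]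

private lemma aux_log_le (c d : ℝ) (hd : 0 < d) :
    ∀ᶠ x : ℝ in Filter.atTop, (Real.log x + 1) ^ c ≤ x ^ d := by
  rcases le_or_gt c 0 with hc | hc
  · filter_upwards [eventually_ge_atTop (1 : ℝ)] with x hx
    have hlog : 0 ≤ Real.log x := Real.log_nonneg hx
    calc (Real.log x + 1) ^ c ≤ 1 :=
          Real.rpow_le_one_of_one_le_of_nonpos (by linarith) hc
      _ ≤ x ^ d := Real.one_le_rpow hx hd.le
  · have hdc : 0 < d / c := div_pos hd hc
    have hlo := (isLittleO_log_rpow_atTop hdc).bound (by norm_num : (0:ℝ) < 1/2)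
    have hbig : ∀ᶠ x : ℝ in atTop, (2 : ℝ) ≤ x ^ (d / c) :=
      (tendsto_rpow_atTop hdc).eventually_ge_atTop 2
    filter_upwards [hlo, hbig, eventually_ge_atTop (1 : ℝ)] with x hx1 hx2 hx3
    have hlog : 0 ≤ Real.log x := Real.log_nonneg hx3
    have hxp : (0 : ℝ) ≤ x ^ (d / c) := by linarith
    have hx1' : Real.log x ≤ (1/2) * x ^ (d / c) := by
      have := hx1
      rwa [Real.norm_eq_abs, Real.norm_eq_abs, abs_of_nonneg hlog, abs_of_nonneg hxp] at this
    have hsum : Real.log x + 1 ≤ x ^ (d / c) := by linarith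
    calc (Real.log x + 1) ^ c ≤ (x ^ (d / c)) ^ c :=
          Real.rpow_le_rpow (by linarith) hsum hc.le
      _ = x ^ d := by
          rw [← Real.rpow_mul (by linarith : (0:ℝ) ≤ x), div_mul_cancel₀ _ hc.ne']

theorem stmt6 (M c a : ℝ) (hM : 0 < M) (ha : 1 < a) (R : ℕ → ℝ)
    (hR : ∀ k : ℕ, 1 ≤ k → |R k| < M * (Real.log k + 1) ^ c / (k : ℝ) ^ a) :
    Filter.Tendsto
      (fun n : ℕ => ∑ k ∈ Finset.Icc 1 n,
        |R k| * (1 - (n.choose k : ℝ) / ((n + k).choose k)))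
      Filter.atTop (nhds 0) := by
  set g : ℕ → ℝ := fun k => M * (Real.log k + 1) ^ c / (k : ℝ) ^ a with hg
  set f : ℕ → ℕ → ℝ := fun n k =>
    if k ∈ Finset.Icc 1 n then |R k| * (1 - (n.choose k : ℝ) / ((n + k).choose k)) else 0
    with hf
  have hg0 : ∀ k, 0 ≤ g k := by
    intro k
    rcases Nat.eq_zero_or_pos k with rfl | hk
    · simp [hg, Real.zero_rpow (by linarith : a ≠ 0)]
    · have h1 : (0:ℝ) ≤ Real.log k + 1 := by
        have := Real.log_nonneg (by exact_mod_cast hk : (1:ℝ) ≤ k)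
        linarith
      have h2 : (0:ℝ) ≤ (k:ℝ) ^ a := Real.rpow_nonneg (Nat.cast_nonneg k) a
      exact div_nonneg (mul_nonneg hM.le (Real.rpow_nonneg h1 c)) h2
  -- summability of g
  have hd : 0 < (a - 1) / 2 := by linarith
  have hsum : Summable g := by
    apply summable_of_isBigO_nat
      (g := fun k : ℕ => (k : ℝ) ^ (-((a + 1) / 2)))
    · exact summable_nat_rpow.2 (by linarith)
    · rw [isBigO_iff]
      refine ⟨M, ?_⟩
      have hlog := tendsto_natCast_atTop_atTop (R := ℝ) |>.eventually (aux_log_le c ((a-1)/2) hd)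
      filter_upwards [hlog, eventually_ge_atTop 1] with k hk hk1
      have hkpos : (0:ℝ) < (k:ℝ) := by exact_mod_cast hk1
      have hka : (0:ℝ) < (k:ℝ) ^ a := Real.rpow_pos_of_pos hkpos a
      have hl1 : (0:ℝ) ≤ Real.log k + 1 := by
        have := Real.log_nonneg (by exact_mod_cast hk1 : (1:ℝ) ≤ (k:ℝ))
        linarith
      rw [Real.norm_eq_abs, Real.norm_eq_abs, abs_of_nonneg (hg0 k),
        abs_of_nonneg (Real.rpow_nonneg hkpos.le _)]
      have hstep : g k ≤ M * ((k:ℝ) ^ ((a-1)/2) / (k:ℝ) ^ a) := by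
        show M * (Real.log k + 1) ^ c / (k:ℝ) ^ a ≤ _
        rw [mul_div_assoc]
        exact mul_le_mul_of_nonneg_left ((div_le_div_iff_of_pos_right hka).2 hk) hM.le
      calc g k ≤ M * ((k:ℝ) ^ ((a-1)/2) / (k:ℝ) ^ a) := hstep
        _ = M * (k:ℝ) ^ (-((a + 1) / 2)) := by
            rw [← Real.rpow_sub hkpos]
            ring_nf
  -- bound
  have hfg : ∀ n k, ‖f n k‖ ≤ g k := by
    intro n k
    by_cases h : k ∈ Finset.Icc 1 n
    · obtain ⟨hk1, hkn⟩ := Finset.mem_Icc.1 h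
      have hpos : (0:ℝ) < ((n + k).choose k : ℝ) := by
        exact_mod_cast Nat.choose_pos (Nat.le_add_left k n)
      have hr0 : (0:ℝ) ≤ (n.choose k : ℝ) / ((n + k).choose k) :=
        div_nonneg (Nat.cast_nonneg _) hpos.le
      have hr1 : (n.choose k : ℝ) / ((n + k).choose k) ≤ 1 := by
        rw [div_le_one hpos]
        exact_mod_cast Nat.choose_le_choose k (Nat.le_add_right n k)
      have habs : 0 ≤ |R k| * (1 - (n.choose k : ℝ) / ((n + k).choose k)) :=
        mul_nonneg (abs_nonneg _) (by linarith)
      rw [hf]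
      simp only [if_pos h, Real.norm_eq_abs, abs_of_nonneg habs]
      calc |R k| * (1 - (n.choose k : ℝ) / ((n + k).choose k)) ≤ |R k| * 1 :=
            mul_le_mul_of_nonneg_left (by linarith) (abs_nonneg _)
        _ = |R k| := mul_one _
        _ ≤ g k := (hR k hk1).le
    · rw [hf]
      simp only [if_neg h, norm_zero]
      exact hg0 k
  -- pointwise limits
  have hlim : ∀ k, Tendsto (fun n => f n k) atTop (nhds 0) := by
    intro k
    by_cases hk : 1 ≤ k
    · have h1 : Tendsto
          (fun n : ℕ => |R k| * (1 - (n.choose k : ℝ) / ((n + k).choose k)))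
          atTop (nhds (|R k| * (1 - 1))) :=
        tendsto_const_nhds.mul (tendsto_const_nhds.sub (aux_ratio_tendsto k))
      rw [sub_self, mul_zero] at h1
      apply h1.congr'
      filter_upwards [eventually_ge_atTop k] with n hn
      rw [hf]
      simp [Finset.mem_Icc, hk, hn]
    · have : ∀ n, f n k = 0 := by
        intro n
        rw [hf]
        simp only [Finset.mem_Icc]
        rw [if_neg (by omega)]
      simp only [this]
      exact tendsto_const_nhds
  have H := tendsto_tsum_of_dominated_convergence (f := f) (g := fun _ => (0:ℝ))
    hsum hlim (Eventually.of_forall hfg)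
  rw [tsum_zero] at H
  apply H.congr
  intro n
  rw [tsum_eq_sum (s := Finset.Icc 1 n) (fun k hk => by rw [hf]; simp [hk])]
  exact Finset.sum_congr rfl fun k hk => by rw [hf]; simp [hk]
end

section
/- For every positive integer n and every complex number z with |z| < 1, the generating function of the multiple harmonic star sums H_n^⋆({2}^a) satisfies ∑_{a≥0} H_n^⋆({2}^a) z^{2a} = -2 ∑_{k=1}^{n} (C(n,k)/C(n+k,k)) · (-1)^k k² / (k² - z²). -/
lemma Hstar_nil (n : ℕ) : Hstar n [] = 1 := rfl

lemma Hstar_cons (n s : ℕ) (rest : List ℕ) :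
    Hstar n (s :: rest) = ∑ k ∈ Finset.Icc 1 n, (1 / (k : ℝ) ^ s) * Hstar k rest := rfl

lemma Hstar_zero (s : ℕ) (rest : List ℕ) : Hstar 0 (s :: rest) = 0 := by
  rw [Hstar_cons]; simp

lemma Hstar_succ (n s : ℕ) (rest : List ℕ) :
    Hstar (n+1) (s :: rest)
      = Hstar n (s :: rest) + (1 / ((n:ℝ)+1) ^ s) * Hstar (n+1) rest := by
  rw [Hstar_cons, Hstar_cons, Finset.sum_Icc_succ_top (by omega)]
  push_cast; ring_nf

lemma Hstar_nonneg (s : List ℕ) (n : ℕ) : 0 ≤ Hstar n s := by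
  induction s generalizing n with
  | nil => rw [Hstar_nil]; norm_num
  | cons a rest ih =>
    rw [Hstar_cons]
    exact Finset.sum_nonneg fun k _ => mul_nonneg (by positivity) (ih k)

lemma Hstar_le (a : ℕ) : ∀ n, Hstar n (List.replicate a 2) ≤ 2 ^ n := by
  induction a with
  | zero => intro n; rw [List.replicate, Hstar_nil]; exact one_le_pow₀ (by norm_num)
  | succ a ih =>
    intro n
    induction n with
    | zero => rw [List.replicate, Hstar_zero]; norm_num
    | succ n ihn =>
      rw [List.replicate, Hstar_succ, ← List.replicate]
      rcases Nat.eq_zero_or_pos n with h | h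
      · subst h
        rw [List.replicate, Hstar_zero]
        have := ih 1
        norm_num at this ⊢
        linarith
      · have h1 : Hstar n (2 :: List.replicate a 2) ≤ 2 ^ n := by
          rw [← List.replicate]; exact ihn
        have h2 : Hstar (n+1) (List.replicate a 2) ≤ 2 ^ (n+1) := ih (n+1)
        have h3 : (1 / ((n:ℝ)+1) ^ 2) ≤ 1/2 := by
          rw [div_le_div_iff₀ (by positivity) (by norm_num)]
          have : (2:ℝ) ≤ ((n:ℝ)+1) := by
            have : (1:ℝ) ≤ (n:ℝ) := by exact_mod_cast h
            linarith
          nlinarith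
        have h4 : (1 / ((n:ℝ)+1) ^ 2) * Hstar (n+1) (List.replicate a 2) ≤ (1/2) * 2^(n+1) :=
          mul_le_mul h3 h2 (Hstar_nonneg _ _) (by norm_num)
        calc Hstar n (2 :: List.replicate a 2) + (1 / ((n:ℝ)+1) ^ 2) * Hstar (n+1) (List.replicate a 2)
            ≤ 2^n + (1/2) * 2^(n+1) := by linarith
          _ = 2^(n+1) := by ring

section PartA
variable (z : ℂ) (hz : ‖z‖ < 1)

noncomputable def Fterm (z : ℂ) (n a : ℕ) : ℂ := (Hstar n (List.replicate a 2) : ℂ) * z ^ (2 * a)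

lemma summable_Fterm (hz : ‖z‖ < 1) (n : ℕ) : Summable (Fterm z n) := by
  apply Summable.of_norm_bounded (g := fun a => (2:ℝ)^n * (‖z‖ ^ 2) ^ a)
  · exact (summable_geometric_of_lt_one (by positivity)
      (by nlinarith [norm_nonneg z, hz])).mul_left _
  · intro a
    have h1 : ‖Fterm z n a‖ = |Hstar n (List.replicate a 2)| * ‖z‖ ^ (2*a) := by
      rw [Fterm, norm_mul, Complex.norm_real, norm_pow, Real.norm_eq_abs]
    rw [h1, abs_of_nonneg (Hstar_nonneg _ _), pow_mul]
    exact mul_le_mul_of_nonneg_right (Hstar_le a n) (by positivity)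

lemma Fterm_rec (n a : ℕ) :
    Fterm z (n+1) (a+1) - Fterm z n (a+1) = (z^2 / ((n:ℂ)+1)^2) * Fterm z (n+1) a := by
  simp only [Fterm, List.replicate, Hstar_succ]
  push_cast
  field_simp
  ring

lemma F_rec (hz : ‖z‖ < 1) (n : ℕ) :
    (∑' a, Fterm z (n+1) a) * (((n:ℂ)+1)^2 - z^2) = (∑' a, Fterm z n a) * ((n:ℂ)+1)^2 := by
  have hs1 := summable_Fterm z hz (n+1)
  have hs0 := summable_Fterm z hz n
  have hd : ∑' a, (Fterm z (n+1) a - Fterm z n a)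
      = (z^2 / ((n:ℂ)+1)^2) * ∑' a, Fterm z (n+1) a := by
    rw [(hs1.sub hs0).tsum_eq_zero_add]
    have h0 : Fterm z (n+1) 0 - Fterm z n 0 = 0 := by simp [Fterm, Hstar_nil]
    rw [h0, zero_add]
    simp_rw [Fterm_rec]
    rw [tsum_mul_left]
  rw [hs1.tsum_sub hs0] at hd
  have hne : ((n:ℂ)+1)^2 ≠ 0 := by
    intro h
    have : ((n:ℂ)+1) = 0 := by
      exact pow_eq_zero_iff (by norm_num) |>.mp h
    exact_mod_cast Nat.cast_add_one_ne_zero n this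
  field_simp at hd
  linear_combination hd

lemma F_zero : ∑' a, Fterm z 0 a = 1 := by
  rw [tsum_eq_single 0]
  · simp [Fterm, Hstar_nil]
  · intro a ha
    rcases Nat.exists_eq_succ_of_ne_zero ha with ⟨b, rfl⟩
    simp [Fterm, List.replicate, Hstar_zero]

lemma sq_sub_ne (hz : ‖z‖ < 1) (k : ℕ) (hk : 1 ≤ k) : ((k:ℂ)^2 - z^2) ≠ 0 := by
  intro h
  have h2 : (k:ℂ)^2 = z^2 := by linear_combination h
  have h3 : ‖(k:ℂ)^2‖ = ‖z^2‖ := by rw [h2]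
  rw [norm_pow, norm_pow, Complex.norm_natCast] at h3
  have h4 : (1:ℝ) ≤ (k:ℝ) := by exact_mod_cast hk
  nlinarith [norm_nonneg z, hz]

lemma F_prod (hz : ‖z‖ < 1) (n : ℕ) :
    ∑' a, Fterm z n a = ∏ k ∈ Finset.Icc 1 n, ((k:ℂ)^2 / ((k:ℂ)^2 - z^2)) := by
  induction n with
  | zero => simpa using F_zero z
  | succ n ih =>
    rw [Finset.prod_Icc_succ_top (by omega), ← ih]
    have h1 := F_rec z hz n
    have hne := sq_sub_ne z hz (n+1) (by omega)
    push_cast at hne h1 ⊢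
    rw [← mul_div_assoc, eq_div_iff hne]
    linear_combination h1

lemma alt0 (m : ℕ) (hm : 1 ≤ m) :
    ∑ j ∈ Finset.range (m+1), (-1:ℂ)^j * (m.choose j : ℂ) = 0 := by
  have h := Int.alternating_sum_range_choose_of_ne (n := m) (by omega)
  have := congrArg (fun x : ℤ => (x : ℂ)) h
  push_cast at this
  convert this using 2

lemma alt1 (m : ℕ) (hm : 2 ≤ m) :
    ∑ j ∈ Finset.range (m+1), (-1:ℂ)^j * (j:ℂ) * (m.choose j : ℂ) = 0 := by
  rw [Finset.sum_range_succ']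
  simp only [Nat.cast_zero, mul_zero, zero_mul, add_zero]
  push_cast
  have key : ∀ i : ℕ, (-1:ℂ)^(i+1) * ((i:ℂ)+1) * (m.choose (i+1) : ℂ)
      = (-(m:ℂ)) * ((-1:ℂ)^i * ((m-1).choose i : ℂ)) := by
    intro i
    have h : m * (m-1).choose i = m.choose (i+1) * (i+1) := by
      have := Nat.add_one_mul_choose_eq (m-1) i
      rw [show m - 1 + 1 = m by omega] at this
      exact this
    have hC : ((m:ℂ)) * ((m-1).choose i : ℂ) = (m.choose (i+1) : ℂ) * ((i:ℂ)+1) := by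
      exact_mod_cast congrArg (fun x : ℕ => (x:ℂ)) h
    rw [pow_succ]
    linear_combination ((-1:ℂ)^i) * hC
  calc ∑ i ∈ Finset.range m, (-1:ℂ)^(i+1) * ((i:ℂ)+1) * (m.choose (i+1) : ℂ)
      = ∑ i ∈ Finset.range m, (-(m:ℂ)) * ((-1:ℂ)^i * ((m-1).choose i : ℂ)) := by
        apply Finset.sum_congr rfl; intro i _
        have := key i; push_cast at this ⊢; linear_combination this
    _ = (-(m:ℂ)) * ∑ i ∈ Finset.range m, (-1:ℂ)^i * ((m-1).choose i : ℂ) := by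
        rw [Finset.mul_sum]
    _ = 0 := by
        obtain ⟨m', rfl⟩ : ∃ m', m = m'+1 := ⟨m-1, by omega⟩
        simp only [Nat.add_sub_cancel]
        rw [alt0 m' (by omega)]; ring

lemma alt2 (m : ℕ) (hm : 3 ≤ m) :
    ∑ j ∈ Finset.range (m+1), (-1:ℂ)^j * (j:ℂ)^2 * (m.choose j : ℂ) = 0 := by
  rw [Finset.sum_range_succ']
  simp only [Nat.cast_zero, ne_eq, OfNat.ofNat_ne_zero, not_false_eq_true, zero_pow, mul_zero,
    zero_mul, add_zero]
  push_cast
  have key : ∀ i : ℕ, (-1:ℂ)^(i+1) * ((i:ℂ)+1)^2 * (m.choose (i+1) : ℂ)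
      = (-(m:ℂ)) * ((-1:ℂ)^i * ((i:ℂ)+1) * ((m-1).choose i : ℂ)) := by
    intro i
    have h : m * (m-1).choose i = m.choose (i+1) * (i+1) := by
      have := Nat.add_one_mul_choose_eq (m-1) i
      rw [show m - 1 + 1 = m by omega] at this
      exact this
    have hC : ((m:ℂ)) * ((m-1).choose i : ℂ) = (m.choose (i+1) : ℂ) * ((i:ℂ)+1) := by
      exact_mod_cast congrArg (fun x : ℕ => (x:ℂ)) h
    rw [pow_succ]
    linear_combination ((-1:ℂ)^i * ((i:ℂ)+1)) * hC
  calc ∑ i ∈ Finset.range m, (-1:ℂ)^(i+1) * ((i:ℂ)+1)^2 * (m.choose (i+1) : ℂ)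
      = ∑ i ∈ Finset.range m, (-(m:ℂ)) * ((-1:ℂ)^i * ((i:ℂ)+1) * ((m-1).choose i : ℂ)) := by
        apply Finset.sum_congr rfl; intro i _
        have := key i; push_cast at this ⊢; linear_combination this
    _ = (-(m:ℂ)) * (∑ i ∈ Finset.range m, ((-1:ℂ)^i * (i:ℂ) * ((m-1).choose i : ℂ))
          + ∑ i ∈ Finset.range m, ((-1:ℂ)^i * ((m-1).choose i : ℂ))) := by
        rw [← Finset.sum_add_distrib, Finset.mul_sum]
        apply Finset.sum_congr rfl; intro i _; ring
    _ = 0 := by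
        obtain ⟨m', rfl⟩ : ∃ m', m = m'+1 := ⟨m-1, by omega⟩
        simp only [Nat.add_sub_cancel]
        rw [alt1 m' (by omega), alt0 m' (by omega)]; ring

lemma refl_sum (n : ℕ) (hn : 2 ≤ n) :
    ∑ k ∈ Finset.Icc 1 n, (-1:ℂ)^k * (k:ℂ)^2 * ((2*n).choose (n-k) : ℂ) = 0 := by
  set g : ℕ → ℂ := fun j => (-1:ℂ)^j * ((j:ℂ) - (n:ℂ))^2 * ((2*n).choose j : ℂ) with hg
  have hS : ∑ j ∈ Finset.range (2*n+1), g j = 0 := by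
    have e : ∀ j ∈ Finset.range (2*n+1), g j =
        (-1:ℂ)^j * (j:ℂ)^2 * ((2*n).choose j : ℂ)
        - (2*(n:ℂ)) * ((-1:ℂ)^j * (j:ℂ) * ((2*n).choose j : ℂ))
        + (n:ℂ)^2 * ((-1:ℂ)^j * ((2*n).choose j : ℂ)) := by
      intro j _; simp only [hg]; ring
    rw [Finset.sum_congr rfl e, Finset.sum_add_distrib, Finset.sum_sub_distrib,
      ← Finset.mul_sum, ← Finset.mul_sum, alt2 (2*n) (by omega), alt1 (2*n) (by omega),
      alt0 (2*n) (by omega)]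
    ring
  have hmid : g n = 0 := by simp [hg]
  have hsplit : ∑ j ∈ Finset.range (2*n+1), g j
      = ∑ j ∈ Finset.range n, g j + g n + ∑ j ∈ Finset.Ico (n+1) (2*n+1), g j := by
    rw [Finset.range_eq_Ico, ← Finset.sum_Ico_consecutive g (by omega : 0 ≤ n) (by omega : n ≤ 2*n+1),
      ← Finset.range_eq_Ico, Finset.sum_eq_sum_Ico_succ_bot (by omega : n < 2*n+1)]
    ring
  have hA : ∑ j ∈ Finset.range n, g j
      = ∑ k ∈ Finset.Icc 1 n, (-1:ℂ)^n * ((-1:ℂ)^k * (k:ℂ)^2 * ((2*n).choose (n-k) : ℂ)) := by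
    apply Finset.sum_nbij' (i := fun j => n - j) (j := fun k => n - k)
    · intro j hj; simp only [Finset.mem_range] at hj; simp only [Finset.mem_Icc]; omega
    · intro k hk; simp only [Finset.mem_Icc] at hk; simp only [Finset.mem_range]; omega
    · intro j hj; simp only [Finset.mem_range] at hj; omega
    · intro k hk; simp only [Finset.mem_Icc] at hk; omega
    · intro j hj
      simp only [Finset.mem_range] at hj
      simp only [hg, Nat.sub_sub_self (by omega : j ≤ n)]
      have hc : ((n - j : ℕ) : ℂ) = (n:ℂ) - (j:ℂ) := by
        push_cast [Nat.cast_sub (by omega : j ≤ n)]; ring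
      have hsign : (-1:ℂ)^n * (-1:ℂ)^(n-j) = (-1:ℂ)^j * ((-1:ℂ)^(n-j))^2 := by
        rw [← pow_add, ← pow_mul, ← pow_add]
        congr 1; omega
      have hsq : ((-1:ℂ)^(n-j))^2 = 1 := by
        rw [← pow_mul, mul_comm (n-j) 2, pow_mul]; norm_num
      rw [hc]
      have h5 : (-1:ℂ)^n * (-1:ℂ)^(n-j) = (-1:ℂ)^j := by rw [hsign, hsq, mul_one]
      calc (-1:ℂ)^j * ((j:ℂ) - n)^2 * ((2*n).choose j : ℂ)
          = ((-1:ℂ)^n * (-1:ℂ)^(n-j)) * ((n:ℂ) - j)^2 * ((2*n).choose j : ℂ) := by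
            rw [h5]; ring
        _ = (-1:ℂ)^n * ((-1:ℂ)^(n-j) * ((n:ℂ) - j)^2 * ((2*n).choose j : ℂ)) := by ring
  have hB : ∑ j ∈ Finset.Ico (n+1) (2*n+1), g j
      = ∑ k ∈ Finset.Icc 1 n, (-1:ℂ)^n * ((-1:ℂ)^k * (k:ℂ)^2 * ((2*n).choose (n-k) : ℂ)) := by
    apply Finset.sum_nbij' (i := fun j => j - n) (j := fun k => n + k)
    · intro j hj; simp only [Finset.mem_Ico] at hj; simp only [Finset.mem_Icc]; omega
    · intro k hk; simp only [Finset.mem_Icc] at hk; simp only [Finset.mem_Ico]; omega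
    · intro j hj; simp only [Finset.mem_Ico] at hj; omega
    · intro k hk; simp only [Finset.mem_Icc] at hk; omega
    · intro j hj
      simp only [Finset.mem_Ico] at hj
      have hc : ((j - n : ℕ) : ℂ) = (j:ℂ) - (n:ℂ) := by
        push_cast [Nat.cast_sub (by omega : n ≤ j)]; ring
      have hchoose : ((2*n).choose (n - (j - n))) = (2*n).choose j := by
        rw [show n - (j-n) = 2*n - j by omega]; exact Nat.choose_symm (by omega)
      have hsign : (-1:ℂ)^n * (-1:ℂ)^(j-n) = (-1:ℂ)^j := by
        rw [← pow_add]; congr 1; omega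
      simp only [hg]
      rw [hchoose, hc]
      calc (-1:ℂ)^j * ((j:ℂ) - n)^2 * ((2*n).choose j : ℂ)
          = ((-1:ℂ)^n * (-1:ℂ)^(j-n)) * ((j:ℂ) - n)^2 * ((2*n).choose j : ℂ) := by rw [hsign]
        _ = (-1:ℂ)^n * ((-1:ℂ)^(j-n) * ((j:ℂ) - n)^2 * ((2*n).choose j : ℂ)) := by ring
  have hzero : (-1:ℂ)^n * ((2:ℂ) * ∑ k ∈ Finset.Icc 1 n,
      (-1:ℂ)^k * (k:ℂ)^2 * ((2*n).choose (n-k) : ℂ)) = 0 := by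
    have h := hsplit.symm.trans hS
    rw [hA, hB, hmid, ← Finset.mul_sum] at h
    linear_combination h
  rcases mul_eq_zero.mp hzero with h | h
  · exact absurd h (pow_ne_zero n (by norm_num))
  · rcases mul_eq_zero.mp h with h2 | h2
    · norm_num at h2
    · exact h2

lemma choose_ratio (n k : ℕ) (hkn : k ≤ n) :
    (n.choose k : ℂ) / ((n+k).choose k : ℂ)
      = ((2*n).choose (n-k) : ℂ) / ((2*n).choose n : ℂ) := by
  rw [Nat.cast_choose ℂ hkn, Nat.cast_choose ℂ (by omega : k ≤ n + k),
    Nat.cast_choose ℂ (by omega : n - k ≤ 2*n), Nat.cast_choose ℂ (by omega : n ≤ 2*n),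
    show n + k - k = n by omega, show 2*n - (n-k) = n + k by omega,
    show 2*n - n = n by omega]
  have f1 : (Nat.factorial k : ℂ) ≠ 0 := Nat.cast_ne_zero.mpr (Nat.factorial_ne_zero _)
  have f2 : (Nat.factorial n : ℂ) ≠ 0 := Nat.cast_ne_zero.mpr (Nat.factorial_ne_zero _)
  have f3 : (Nat.factorial (n-k) : ℂ) ≠ 0 := Nat.cast_ne_zero.mpr (Nat.factorial_ne_zero _)
  have f4 : (Nat.factorial (n+k) : ℂ) ≠ 0 := Nat.cast_ne_zero.mpr (Nat.factorial_ne_zero _)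
  have f5 : (Nat.factorial (2*n) : ℂ) ≠ 0 := Nat.cast_ne_zero.mpr (Nat.factorial_ne_zero _)
  field_simp

lemma const_sum (n : ℕ) (hn : 2 ≤ n) :
    ∑ k ∈ Finset.Icc 1 n,
      (-1:ℂ)^k * (k:ℂ)^2 * ((n.choose k : ℂ) / ((n+k).choose k : ℂ)) = 0 := by
  have hC : ((2*n).choose n : ℂ) ≠ 0 :=
    Nat.cast_ne_zero.mpr (Nat.choose_pos (by omega)).ne'
  have e : ∀ k ∈ Finset.Icc 1 n,
      (-1:ℂ)^k * (k:ℂ)^2 * ((n.choose k : ℂ) / ((n+k).choose k : ℂ))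
        = (1 / ((2*n).choose n : ℂ)) * ((-1:ℂ)^k * (k:ℂ)^2 * ((2*n).choose (n-k) : ℂ)) := by
    intro k hk
    simp only [Finset.mem_Icc] at hk
    rw [choose_ratio n k hk.2]
    ring
  rw [Finset.sum_congr rfl e, ← Finset.mul_sum, refl_sum n hn, mul_zero]

lemma choose_step (n k : ℕ) (hkn : k ≤ n) :
    ((n+1).choose k : ℂ) / (((n+1)+k).choose k : ℂ) * (((n:ℂ)+1)^2 - (k:ℂ)^2)
      = ((n:ℂ)+1)^2 * ((n.choose k : ℂ) / ((n+k).choose k : ℂ)) := by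
  rw [Nat.cast_choose ℂ hkn, Nat.cast_choose ℂ (by omega : k ≤ n + 1),
    Nat.cast_choose ℂ (by omega : k ≤ n + 1 + k), Nat.cast_choose ℂ (by omega : k ≤ n + k),
    show n + 1 - k = (n - k) + 1 by omega, show n + 1 + k - k = n + 1 by omega,
    show n + k - k = n by omega]
  have e1 : (Nat.factorial (n+1) : ℂ) = ((n:ℂ)+1) * (Nat.factorial n : ℂ) := by
    rw [Nat.factorial_succ]; push_cast; ring
  have e2 : (Nat.factorial ((n-k)+1) : ℂ) = (((n:ℂ)-(k:ℂ))+1) * (Nat.factorial (n-k) : ℂ) := by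
    rw [Nat.factorial_succ]; push_cast [Nat.cast_sub hkn]; ring
  have e3 : (Nat.factorial (n+1+k) : ℂ) = ((n:ℂ)+1+(k:ℂ)) * (Nat.factorial (n+k) : ℂ) := by
    rw [show n+1+k = (n+k)+1 by omega, Nat.factorial_succ]; push_cast; ring
  rw [e1, e2, e3]
  have f1 : (Nat.factorial k : ℂ) ≠ 0 := Nat.cast_ne_zero.mpr (Nat.factorial_ne_zero _)
  have f2 : (Nat.factorial n : ℂ) ≠ 0 := Nat.cast_ne_zero.mpr (Nat.factorial_ne_zero _)
  have f3 : (Nat.factorial (n-k) : ℂ) ≠ 0 := Nat.cast_ne_zero.mpr (Nat.factorial_ne_zero _)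
  have f4 : (Nat.factorial (n+k) : ℂ) ≠ 0 := Nat.cast_ne_zero.mpr (Nat.factorial_ne_zero _)
  have f5 : ((n:ℂ)-(k:ℂ))+1 ≠ 0 := by
    have : ((((n-k)+1 : ℕ)) : ℂ) = ((n:ℂ)-(k:ℂ))+1 := by push_cast [Nat.cast_sub hkn]; ring
    rw [← this]
    exact Nat.cast_ne_zero.mpr (by omega)
  have f6 : ((n:ℂ)+1+(k:ℂ)) ≠ 0 := by
    have : ((n+1+k : ℕ) : ℂ) = ((n:ℂ)+1+(k:ℂ)) := by push_cast; ring
    rw [← this]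
    exact Nat.cast_ne_zero.mpr (by omega)
  field_simp
  ring

lemma prod_eq_RHS (z : ℂ) (hz : ‖z‖ < 1) (n : ℕ) (hn : 1 ≤ n) :
    ∏ k ∈ Finset.Icc 1 n, ((k:ℂ)^2 / ((k:ℂ)^2 - z^2))
      = -2 * ∑ k ∈ Finset.Icc 1 n,
          ((n.choose k : ℂ) / ((n + k).choose k)) *
            ((-1 : ℂ) ^ k * (k : ℂ) ^ 2 / ((k : ℂ) ^ 2 - z ^ 2)) := by
  induction n, hn using Nat.le_induction with
  | base =>
    simp only [Finset.Icc_self, Finset.prod_singleton, Finset.sum_singleton]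
    norm_num
    ring
  | succ n hn ih =>
    rw [Finset.prod_Icc_succ_top (by omega), ih]
    have hA : ((((n+1):ℕ)):ℂ) = (n:ℂ)+1 := by push_cast; ring
    have hBne : (((n:ℂ)+1)^2 - z^2) ≠ 0 := by
      have := sq_sub_ne z hz (n+1) (by omega)
      push_cast at this; exact this
    have key : (∑ k ∈ Finset.Icc 1 (n+1),
          (((n+1).choose k : ℂ) / (((n+1) + k).choose k)) *
            ((-1 : ℂ) ^ k * (k : ℂ) ^ 2 / ((k : ℂ) ^ 2 - z ^ 2))) * (((n:ℂ)+1)^2 - z^2)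
        = ((n:ℂ)+1)^2 * ∑ k ∈ Finset.Icc 1 n,
          ((n.choose k : ℂ) / ((n + k).choose k)) *
            ((-1 : ℂ) ^ k * (k : ℂ) ^ 2 / ((k : ℂ) ^ 2 - z ^ 2)) := by
      rw [Finset.sum_mul]
      have e : ∀ k ∈ Finset.Icc 1 (n+1),
          ((((n+1).choose k : ℂ) / (((n+1) + k).choose k)) *
            ((-1 : ℂ) ^ k * (k : ℂ) ^ 2 / ((k : ℂ) ^ 2 - z ^ 2))) * (((n:ℂ)+1)^2 - z^2)
          = (-1:ℂ)^k * (k:ℂ)^2 * (((n+1).choose k : ℂ) / (((n+1)+k).choose k : ℂ))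
            + (-1:ℂ)^k * ((k:ℂ)^2 * ((((n:ℂ)+1)^2 - (k:ℂ)^2)
                * (((n+1).choose k : ℂ) / (((n+1)+k).choose k : ℂ))) / ((k:ℂ)^2 - z^2)) := by
        intro k hk
        simp only [Finset.mem_Icc] at hk
        have hne := sq_sub_ne z hz k hk.1
        have hc2 : ((((n+1)+k).choose k : ℕ) : ℂ) ≠ 0 :=
          Nat.cast_ne_zero.mpr (Nat.choose_pos (by omega)).ne'
        field_simp [hne, hc2]
        ring
      rw [Finset.sum_congr rfl e, Finset.sum_add_distrib, const_sum (n+1) (by omega), zero_add,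
        Finset.sum_Icc_succ_top (by omega : 1 ≤ n + 1)]
      have htop : (-1:ℂ)^(n+1) * (((n+1:ℕ):ℂ)^2 * ((((n:ℂ)+1)^2 - ((n+1:ℕ):ℂ)^2)
          * (((n+1).choose (n+1) : ℂ) / (((n+1)+(n+1)).choose (n+1) : ℂ)))
            / (((n+1:ℕ):ℂ)^2 - z^2)) = 0 := by
        rw [hA]; ring_nf
      rw [htop, add_zero, Finset.mul_sum]
      apply Finset.sum_congr rfl
      intro k hk
      simp only [Finset.mem_Icc] at hk
      have hstep := choose_step n k hk.2
      linear_combination ((-1:ℂ)^k * (k:ℂ)^2 / ((k:ℂ)^2 - z^2)) * hstep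
    push_cast
    rw [← mul_div_assoc, div_eq_iff hBne]
    linear_combination (2:ℂ) * key


theorem stmt7 (n : ℕ) (hn : 0 < n) (z : ℂ) (hz : ‖z‖ < 1) :
    ∑' a : ℕ, (Hstar n (List.replicate a 2) : ℂ) * z ^ (2 * a)
      = -2 * ∑ k ∈ Finset.Icc 1 n,
          ((n.choose k : ℂ) / ((n + k).choose k)) *
            ((-1 : ℂ) ^ k * (k : ℂ) ^ 2 / ((k : ℂ) ^ 2 - z ^ 2)) := by
  have h1 : (∑' a : ℕ, (Hstar n (List.replicate a 2) : ℂ) * z ^ (2 * a))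
      = ∑' a, Fterm z n a := rfl
  rw [h1, F_prod z hz n, prod_eq_RHS z hz n hn]
end PartA
end

section
/- For every positive integer n and every complex number z with |z| < 1, we have ∑_{a≥0} H_n^⋆({2}^a) z^{2a} = ∏_{k=1}^{n} (1 - z²/k²)^{-1}. -/
lemma Hsplit (n s : ℕ) (rest : List ℕ) :
    Hstar (n+1) (s :: rest) = Hstar n (s :: rest) + (1 / ((n+1 : ℕ) : ℝ) ^ s) * Hstar (n+1) rest := by
  show (∑ k ∈ Finset.Icc 1 (n+1), (1 / (k : ℝ) ^ s) * Hstar k rest) = _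
  rw [Finset.sum_Icc_succ_top (by omega : 1 ≤ n + 1)]
  rfl

lemma Hrec (n a : ℕ) :
    Hstar (n+1) (List.replicate a 2)
      = ∑ b ∈ Finset.range (a+1), (1 / ((n+1 : ℕ) : ℝ) ^ 2) ^ b * Hstar n (List.replicate (a - b) 2) := by
  induction a with
  | zero => simp [Hstar]
  | succ a ih =>
    rw [List.replicate_succ, Hsplit, ← List.replicate_succ, ih]
    conv_rhs => rw [Finset.sum_range_succ']
    simp only [pow_zero, one_mul, Nat.sub_zero, Nat.succ_sub_succ]
    rw [Finset.mul_sum]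
    rw [add_comm]
    congr 1
    apply Finset.sum_congr rfl; intro b _; ring

lemma key (z : ℂ) (hz : ‖z‖ < 1) (n : ℕ) :
    Summable (fun a => ‖(Hstar n (List.replicate a 2) : ℂ) * z ^ (2*a)‖) ∧
    ∑' a : ℕ, (Hstar n (List.replicate a 2) : ℂ) * z ^ (2*a)
      = ∏ k ∈ Finset.Icc 1 n, (1 - z^2/(k:ℂ)^2)⁻¹ := by
  induction n with
  | zero =>
    have h0 : ∀ a, (Hstar 0 (List.replicate a 2) : ℂ) * z ^ (2*a) = if a = 0 then 1 else 0 := by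
      intro a
      cases a with
      | zero => simp [Hstar]
      | succ a => simp [List.replicate_succ, Hstar]
    constructor
    · apply summable_of_ne_finset_zero (s := {0})
      intro a ha
      simp only [Finset.mem_singleton] at ha
      simp [h0, ha]
    · rw [tsum_eq_single 0 (by intro a ha; simp [h0, ha]), h0 0]
      simp
  | succ n ih =>
    obtain ⟨hf, hval⟩ := ih
    set q : ℂ := z^2 / ((n+1 : ℕ) : ℂ)^2 with hqdef
    have hq : ‖q‖ < 1 := by
      have h1 : ‖q‖ ≤ ‖z‖^2 := by
        rw [hqdef, norm_div, norm_pow, norm_pow, Complex.norm_natCast]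
        apply div_le_self (by positivity)
        have : (1:ℝ) ≤ ((n+1:ℕ):ℝ) := by exact_mod_cast Nat.one_le_iff_ne_zero.mpr (by omega)
        nlinarith
      have h2 : ‖z‖^2 < 1 := by
        have : ‖z‖ < 1 := hz
        nlinarith [norm_nonneg z]
      linarith
    have hg : Summable (fun b : ℕ => ‖q ^ b‖) := by
      simp only [norm_pow]
      exact summable_geometric_of_lt_one (norm_nonneg q) hq
    have hconv : ∀ a, (Hstar (n+1) (List.replicate a 2) : ℂ) * z ^ (2*a)
        = ∑ p ∈ Finset.HasAntidiagonal.antidiagonal a, q ^ p.1 *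
            ((Hstar n (List.replicate p.2 2) : ℂ) * z ^ (2 * p.2)) := by
      intro a
      rw [Finset.Nat.sum_antidiagonal_eq_sum_range_succ_mk]
      have := Hrec n a
      have hc : (Hstar (n+1) (List.replicate a 2) : ℂ)
          = ∑ b ∈ Finset.range (a+1), ((1 : ℂ) / ((n+1:ℕ):ℂ)^2)^b * (Hstar n (List.replicate (a-b) 2) : ℂ) := by
        rw [this]; push_cast; ring_nf
      rw [hc, Finset.sum_mul]
      apply Finset.sum_congr rfl
      intro b hb
      simp only [Finset.mem_range] at hb
      have hba : b ≤ a := by omega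
      have hz2 : z ^ (2*a) = z ^ (2*b) * z ^ (2*(a-b)) := by
        rw [← pow_add]; congr 1; omega
      rw [hz2, hqdef]
      simp only [div_pow, one_pow, ← pow_mul]
      ring
    have hsum : Summable (fun a => ‖(Hstar (n+1) (List.replicate a 2) : ℂ) * z ^ (2*a)‖) := by
      have := summable_norm_sum_mul_antidiagonal_of_summable_norm (f := fun b => q^b)
        (g := fun a => (Hstar n (List.replicate a 2) : ℂ) * z ^ (2*a)) hg hf
      apply this.congr
      intro a
      rw [hconv a]
    refine ⟨hsum, ?_⟩
    have htsum := tsum_mul_tsum_eq_tsum_sum_antidiagonal_of_summable_norm (f := fun b => q^b)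
      (g := fun a => (Hstar n (List.replicate a 2) : ℂ) * z ^ (2*a)) hg hf
    calc ∑' a : ℕ, (Hstar (n+1) (List.replicate a 2) : ℂ) * z ^ (2*a)
        = ∑' a : ℕ, ∑ p ∈ Finset.HasAntidiagonal.antidiagonal a, q ^ p.1 *
            ((Hstar n (List.replicate p.2 2) : ℂ) * z ^ (2 * p.2)) := by
          exact tsum_congr hconv
      _ = (∑' b : ℕ, q ^ b) * ∑' a : ℕ, (Hstar n (List.replicate a 2) : ℂ) * z ^ (2*a) := htsum.symm
      _ = (1 - q)⁻¹ * ∏ k ∈ Finset.Icc 1 n, (1 - z^2/(k:ℂ)^2)⁻¹ := by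
          rw [tsum_geometric_of_norm_lt_one hq, hval]
      _ = ∏ k ∈ Finset.Icc 1 (n+1), (1 - z^2/(k:ℂ)^2)⁻¹ := by
          rw [Finset.prod_Icc_succ_top (by omega : 1 ≤ n + 1), hqdef]
          push_cast
          ring

theorem stmt8 (n : ℕ) (hn : 0 < n) (z : ℂ) (hz : ‖z‖ < 1) :
    ∑' a : ℕ, (Hstar n (List.replicate a 2) : ℂ) * z ^ (2 * a)
      = ∏ k ∈ Finset.Icc 1 n, (1 - z ^ 2 / (k : ℂ) ^ 2)⁻¹ := by
  exact (key z hz n).2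
end

section
/- For every complex number z with |z| < 1, the generating function of the multiple zeta star values ζ^⋆({2}^a) satisfies ∑_{a≥0} ζ^⋆({2}^a) z^{2a} = 1 - 2z² ∑_{k=1}^{∞} (-1)^k/(k² - z²). -/
open Finset Filter Topology

namespace Stmt9

noncomputable def f (a N : ℕ) : ℝ := Hstar N (List.replicate a 2)

lemma f_zero (N : ℕ) : f 0 N = 1 := rfl

lemma f_succ (a N : ℕ) : f (a+1) N = ∑ k ∈ Finset.Icc 1 N, (1/(k:ℝ)^2) * f a k := rfl

lemma f_nonneg (a : ℕ) : ∀ N, 0 ≤ f a N := by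
  induction a with
  | zero => intro N; rw [f_zero]; norm_num
  | succ a ih =>
    intro N
    rw [f_succ]
    exact Finset.sum_nonneg fun k _ => mul_nonneg (by positivity) (ih k)

lemma telescope (N : ℕ) : ∑ k ∈ Finset.Icc 1 N, 2/((k:ℝ)*(k+1)) = 2 - 2/((N:ℝ)+1) := by
  induction N with
  | zero => simp
  | succ N ih =>
    rw [Finset.sum_Icc_succ_top (by norm_num), ih]
    have h1 : ((N:ℝ)+1) ≠ 0 := by positivity
    have h2 : ((N:ℝ)+2) ≠ 0 := by positivity
    push_cast
    field_simp
    ring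

lemma f_le (a : ℕ) : ∀ N, 1 ≤ N → f a N ≤ 2 - 2/((N:ℝ)+1) := by
  induction a with
  | zero =>
    intro N hN
    rw [f_zero]
    have : (2:ℝ)/((N:ℝ)+1) ≤ 1 := by
      rw [div_le_one (by positivity)]
      have : (1:ℝ) ≤ (N:ℝ) := by exact_mod_cast hN
      linarith
    linarith
  | succ a ih =>
    intro N _
    rw [f_succ]
    calc ∑ k ∈ Finset.Icc 1 N, (1/(k:ℝ)^2) * f a k
        ≤ ∑ k ∈ Finset.Icc 1 N, 2/((k:ℝ)*(k+1)) := by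
          apply Finset.sum_le_sum
          intro k hk
          have hk1 : 1 ≤ k := (Finset.mem_Icc.mp hk).1
          have hkr : (1:ℝ) ≤ (k:ℝ) := by exact_mod_cast hk1
          have := ih k hk1
          have hpos : (0:ℝ) < (k:ℝ) := by linarith
          calc (1/(k:ℝ)^2) * f a k ≤ (1/(k:ℝ)^2) * (2 - 2/((k:ℝ)+1)) := by
                apply mul_le_mul_of_nonneg_left this (by positivity)
            _ = 2/((k:ℝ)*(k+1)) := by field_simp; ring
      _ = 2 - 2/((N:ℝ)+1) := telescope N

lemma f_le_two (a N : ℕ) : f a N ≤ 2 := by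
  rcases Nat.eq_zero_or_pos N with h | h
  · subst h
    cases a with
    | zero => rw [f_zero]; norm_num
    | succ a => rw [f_succ]; simp
  · have := f_le a N h
    have : (0:ℝ) < 2/((N:ℝ)+1) := by positivity
    linarith [f_le a N h]


lemma sum_Icc_one {M : Type*} [AddCommMonoid M] (h : ℕ → M) (N : ℕ) :
    ∑ k ∈ Finset.Icc 1 N, h k = ∑ n ∈ Finset.range N, h (n+1) := by
  rw [← Finset.Ico_add_one_right_eq_Icc, Finset.sum_Ico_eq_sum_range]
  simp [add_comm]

/-- the term sequence of `zetaStar (replicate (a+1) 2)` re-indexed over ℕ -/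
noncomputable def gg (a n : ℕ) : ℝ := (1/((n:ℝ)+1)^2) * f a (n+1)

lemma sum_range_gg (a N : ℕ) : ∑ n ∈ Finset.range N, gg a n = f (a+1) N := by
  rw [f_succ, sum_Icc_one]
  apply Finset.sum_congr rfl
  intro n _
  simp [gg]

lemma gg_nonneg (a n : ℕ) : 0 ≤ gg a n := mul_nonneg (by positivity) (f_nonneg a _)

lemma summable_gg (a : ℕ) : Summable (gg a) := by
  apply summable_of_sum_range_le (gg_nonneg a)
  intro N
  rw [sum_range_gg]
  exact f_le_two _ _

lemma zetaStar_succ (a : ℕ) :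
    zetaStar (List.replicate (a+1) 2) = ∑' n : ℕ, gg a n := by
  show (∑' k : ℕ+, (1 / (k : ℝ) ^ 2) * Hstar k (List.replicate a 2)) = _
  rw [← Equiv.pnatEquivNat.symm.tsum_eq
      (fun k : ℕ+ => (1 / (k : ℝ) ^ 2) * Hstar (k : ℕ) (List.replicate a 2))]
  apply tsum_congr
  intro n
  have : ((Equiv.pnatEquivNat.symm n : ℕ+) : ℕ) = n + 1 := by
    simp [Equiv.pnatEquivNat, Nat.succPNat]
  rw [this]
  push_cast
  rfl

lemma tendsto_f (a : ℕ) :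
    Tendsto (fun N => f a N) atTop (𝓝 (zetaStar (List.replicate a 2))) := by
  cases a with
  | zero =>
    have : zetaStar (List.replicate 0 2) = 1 := rfl
    rw [this]
    simpa [f_zero] using tendsto_const_nhds (α := ℝ) (f := atTop (α := ℕ))
  | succ a =>
    rw [zetaStar_succ]
    have h := (summable_gg a).hasSum.tendsto_sum_nat
    simpa [sum_range_gg] using h

lemma zetaStar_le_two (a : ℕ) : zetaStar (List.replicate a 2) ≤ 2 :=
  le_of_tendsto (tendsto_f a) (Eventually.of_forall fun N => f_le_two a N)

lemma zetaStar_nonneg (a : ℕ) : 0 ≤ zetaStar (List.replicate a 2) :=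
  ge_of_tendsto (tendsto_f a) (Eventually.of_forall fun N => f_nonneg a N)


lemma f_zero_N (a : ℕ) : f (a+1) 0 = 0 := by rw [f_succ]; simp

lemma f_succ_top (a N : ℕ) :
    f (a+1) (N+1) = f (a+1) N + (1/((N:ℝ)+1)^2) * f a (N+1) := by
  rw [f_succ, f_succ a N, Finset.sum_Icc_succ_top (Nat.one_le_iff_ne_zero.mpr (Nat.succ_ne_zero N))]
  push_cast
  ring

lemma f_succ_top' (a N : ℕ) :
    ((N:ℝ)+1)^2 * f (a+1) (N+1) = ((N:ℝ)+1)^2 * f (a+1) N + f a (N+1) := by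
  rw [f_succ_top]
  have h : ((N:ℝ)+1) ≠ 0 := by positivity
  field_simp

section W

variable {w : ℂ} (hw : ‖w‖ < 1)

include hw

lemma den_ne (k : ℕ) (hk : 1 ≤ k) : ((k:ℂ)^2 - w) ≠ 0 := by
  intro h
  have : (k:ℂ)^2 = w := by linear_combination h
  have habs : ‖((k:ℂ)^2)‖ = ‖w‖ := by rw [this]
  rw [norm_pow] at habs
  simp only [Complex.norm_natCast] at habs
  have hk1 : (1:ℝ) ≤ (k:ℝ) := by exact_mod_cast hk
  nlinarith [norm_nonneg w]

lemma den_ge (k : ℕ) (hk : 1 ≤ k) :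
    (1 - ‖w‖) * (k:ℝ)^2 ≤ ‖(k:ℂ)^2 - w‖ := by
  have htri := norm_add_le ((k:ℂ)^2 - w) w
  rw [sub_add_cancel, norm_pow] at htri
  simp only [Complex.norm_natCast] at htri
  have hk1 : (1:ℝ) ≤ (k:ℝ) := by exact_mod_cast hk
  have h2 : (0:ℝ) ≤ ‖w‖ * ((k:ℝ)^2 - 1) :=
    mul_nonneg (norm_nonneg w) (by nlinarith)
  nlinarith

lemma summable_fw (N : ℕ) : Summable (fun a => ((f a N : ℂ) * w^a)) := by
  apply Summable.of_norm_bounded (g := fun a => 2 * ‖w‖^a)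
    (((summable_geometric_of_lt_one (norm_nonneg w) hw)).mul_left 2)
  intro a
  rw [norm_mul, norm_pow]
  have h1 : ‖(f a N : ℂ)‖ ≤ 2 := by
    rw [Complex.norm_real, Real.norm_eq_abs, abs_of_nonneg (f_nonneg a N)]
    exact f_le_two a N
  nlinarith [norm_nonneg (f a N : ℂ), pow_nonneg (norm_nonneg w) a]

lemma F_step (N : ℕ) :
    (∑' a : ℕ, (f a (N+1) : ℂ) * w^a) * (((N:ℂ)+1)^2 - w)
      = (∑' a : ℕ, (f a N : ℂ) * w^a) * ((N:ℂ)+1)^2 := by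
  have hS1 := summable_fw hw (N+1)
  have hS0 := summable_fw hw N
  have hdiff : (∑' a : ℕ, ((f a (N+1) : ℂ) * w^a - (f a N : ℂ) * w^a))
      = (∑' a : ℕ, (f a (N+1) : ℂ) * w^a) - (∑' a : ℕ, (f a N : ℂ) * w^a) :=
    Summable.tsum_sub hS1 hS0
  have hterm : ∀ a : ℕ,
      (((N:ℂ)+1)^2) * ((f (a+1) (N+1) : ℂ) * w^(a+1) - (f (a+1) N : ℂ) * w^(a+1))
        = w * ((f a (N+1) : ℂ) * w^a) := by
    intro a
    have hr := f_succ_top' a N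
    have hc : (((N:ℂ)+1)^2) * (f (a+1) (N+1) : ℂ)
        = (((N:ℂ)+1)^2) * (f (a+1) N : ℂ) + (f a (N+1) : ℂ) := by
      exact_mod_cast congrArg Complex.ofReal hr
    linear_combination w^(a+1) * hc
  have hshift : (((N:ℂ)+1)^2) * (∑' a : ℕ, ((f a (N+1) : ℂ) * w^a - (f a N : ℂ) * w^a))
      = w * ∑' a : ℕ, (f a (N+1) : ℂ) * w^a := by
    rw [Summable.tsum_eq_zero_add (hS1.sub hS0)]
    have h0 : (f 0 (N+1) : ℂ) * w^0 - (f 0 N : ℂ) * w^0 = 0 := by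
      rw [f_zero, f_zero]; ring
    rw [h0, zero_add, mul_comm, ← tsum_mul_right]
    rw [show (∑' a : ℕ, ((f (a+1) (N+1) : ℂ) * w^(a+1) - (f (a+1) N : ℂ) * w^(a+1)) * ((N:ℂ)+1)^2)
        = ∑' a : ℕ, w * ((f a (N+1) : ℂ) * w^a) from
      tsum_congr (fun a => by rw [mul_comm]; exact hterm a)]
    rw [tsum_mul_left]
  linear_combination (((N:ℂ)+1)^2) * hdiff.symm + hshift

lemma F_prod (N : ℕ) :
    (∑' a : ℕ, (f a N : ℂ) * w^a) = ∏ k ∈ Finset.Icc 1 N, ((k:ℂ)^2/((k:ℂ)^2 - w)) := by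
  induction N with
  | zero =>
    rw [show Finset.Icc 1 0 = (∅ : Finset ℕ) from rfl]
    rw [Summable.tsum_eq_zero_add (summable_fw hw 0)]
    have : ∀ a : ℕ, (f (a+1) 0 : ℂ) * w^(a+1) = 0 := by
      intro a; rw [f_zero_N]; simp
    simp only [this, tsum_zero, f_zero]
    norm_num
  | succ N ih =>
    have hstep := F_step hw N
    have hden : (((N:ℂ)+1)^2 - w) ≠ 0 := by
      have := den_ne hw (N+1) (Nat.le_add_left 1 N)
      push_cast at this
      exact this
    rw [Finset.prod_Icc_succ_top (Nat.one_le_iff_ne_zero.mpr (Nat.succ_ne_zero N)), ← ih]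
    push_cast
    rw [eq_comm, mul_comm, div_mul_eq_mul_div, div_eq_iff hden]
    linear_combination -hstep

end W


/-! ### Alternating binomial identities -/

lemma alt0 (n : ℕ) (hn : 1 ≤ n) :
    ∑ j ∈ Finset.range (n+1), (-1:ℝ)^j * (n.choose j : ℝ) = 0 := by
  have h := Int.alternating_sum_range_choose_of_ne (Nat.one_le_iff_ne_zero.mp hn) (n := n)
  have : ((∑ i ∈ Finset.range (n + 1), (-1:ℤ) ^ i * ↑(n.choose i) : ℤ) : ℝ) = 0 := by
    rw [h]; norm_num
  push_cast at this
  convert this using 2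

lemma alt1 (n : ℕ) (hn : 2 ≤ n) :
    ∑ j ∈ Finset.range (n+1), (-1:ℝ)^j * (j:ℝ) * (n.choose j : ℝ) = 0 := by
  obtain ⟨m, rfl⟩ : ∃ m, n = m + 1 := ⟨n - 1, by omega⟩
  rw [Finset.sum_range_succ']
  simp only [Nat.cast_zero, mul_zero, zero_mul, add_zero]
  have hterm : ∀ i : ℕ, (-1:ℝ)^(i+1) * ((i:ℝ)+1) * ((m+1).choose (i+1) : ℝ)
      = -((m:ℝ)+1) * ((-1:ℝ)^i * (m.choose i : ℝ)) := by
    intro i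
    have h := Nat.add_one_mul_choose_eq m i
    have hc : ((m:ℝ)+1) * (m.choose i : ℝ) = ((m+1).choose (i+1) : ℝ) * ((i:ℝ)+1) := by
      exact_mod_cast congrArg (Nat.cast : ℕ → ℝ) h
    linear_combination ((-1:ℝ)^i) * hc
  rw [Finset.sum_congr rfl (fun i (_ : i ∈ Finset.range (m+1)) => by
        push_cast
        exact hterm i)]
  rw [← Finset.mul_sum, alt0 m (by omega), mul_zero]

lemma alt2 (n : ℕ) (hn : 3 ≤ n) :
    ∑ j ∈ Finset.range (n+1), (-1:ℝ)^j * (j:ℝ)^2 * (n.choose j : ℝ) = 0 := by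
  obtain ⟨m, rfl⟩ : ∃ m, n = m + 1 := ⟨n - 1, by omega⟩
  rw [Finset.sum_range_succ']
  simp only [Nat.cast_zero, zero_pow, mul_zero, zero_mul, add_zero]
  have hterm : ∀ i : ℕ, (-1:ℝ)^(i+1) * ((i:ℝ)+1)^2 * ((m+1).choose (i+1) : ℝ)
      = -((m:ℝ)+1) * ((-1:ℝ)^i * (i:ℝ) * (m.choose i : ℝ))
        + -((m:ℝ)+1) * ((-1:ℝ)^i * (m.choose i : ℝ)) := by
    intro i
    have h := Nat.add_one_mul_choose_eq m i
    have hc : ((m:ℝ)+1) * (m.choose i : ℝ) = ((m+1).choose (i+1) : ℝ) * ((i:ℝ)+1) := by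
      exact_mod_cast congrArg (Nat.cast : ℕ → ℝ) h
    linear_combination ((-1:ℝ)^i * ((i:ℝ)+1)) * hc
  rw [Finset.sum_congr rfl (fun i (_ : i ∈ Finset.range (m+1)) => by
        push_cast
        exact hterm i)]
  rw [Finset.sum_add_distrib, ← Finset.mul_sum, ← Finset.mul_sum,
    alt0 m (by omega), alt1 m (by omega)]
  ring

lemma altpoly (M : ℕ) (hM : 2 ≤ M) :
    ∑ j ∈ Finset.range (2*M+1), (-1:ℝ)^j * ((M:ℝ) - j)^2 * ((2*M).choose j : ℝ) = 0 := by
  have e : ∀ j : ℕ, (-1:ℝ)^j * ((M:ℝ) - j)^2 * ((2*M).choose j : ℝ)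
      = (M:ℝ)^2 * ((-1:ℝ)^j * ((2*M).choose j : ℝ))
        - 2*(M:ℝ) * ((-1:ℝ)^j * (j:ℝ) * ((2*M).choose j : ℝ))
        + ((-1:ℝ)^j * (j:ℝ)^2 * ((2*M).choose j : ℝ)) := by
    intro j; ring
  simp only [e]
  rw [Finset.sum_add_distrib, Finset.sum_sub_distrib, ← Finset.mul_sum, ← Finset.mul_sum]
  rw [alt0 (2*M) (by omega), alt1 (2*M) (by omega), alt2 (2*M) (by omega)]
  ring

lemma neg_one_pow_sub (i n : ℕ) (h : i ≤ n) : (-1:ℝ)^(n - i) = (-1:ℝ)^n * (-1:ℝ)^i := by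
  have : (-1:ℝ)^(n-i) * (-1:ℝ)^i = (-1:ℝ)^n := by
    rw [← pow_add, Nat.sub_add_cancel h]
  have hsq : (-1:ℝ)^i * (-1:ℝ)^i = 1 := by
    rw [← pow_add, ← two_mul, pow_mul]; norm_num
  linear_combination ((-1:ℝ)^i) * this - ((-1:ℝ)^(n-i)) * hsq

lemma halfsum (M : ℕ) (hM : 2 ≤ M) :
    ∑ j ∈ Finset.range M, (-1:ℝ)^j * ((M:ℝ) - j)^2 * ((2*M).choose j : ℝ) = 0 := by
  set g : ℕ → ℝ := fun j => (-1:ℝ)^j * ((M:ℝ) - j)^2 * ((2*M).choose j : ℝ) with hg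
  have hsymm : ∀ j, j ≤ 2*M → g (2*M - j) = g j := by
    intro j hj
    simp only [hg]
    rw [Nat.choose_symm hj, neg_one_pow_sub j (2*M) hj]
    have hcast : ((2*M - j : ℕ) : ℝ) = 2*(M:ℝ) - (j:ℝ) := by
      push_cast [Nat.cast_sub hj]; ring
    rw [hcast]
    have h1 : ((M:ℝ) - (2*(M:ℝ) - (j:ℝ)))^2 = ((M:ℝ) - j)^2 := by ring
    rw [h1]
    have h2 : (-1:ℝ)^(2*M) = 1 := by rw [pow_mul]; norm_num
    rw [h2]; ring
  -- full sum is zero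
  have hfull := altpoly M hM
  -- split:  range (2M+1) = range M ∪ {M} ∪ [M+1, 2M]
  have hsplit : ∑ j ∈ Finset.range (2*M+1), g j
      = ∑ j ∈ Finset.range M, g j + g M + ∑ j ∈ Finset.Ico (M+1) (2*M+1), g j := by
    rw [← Finset.sum_range_succ]
    rw [← Finset.sum_range_add_sum_Ico g (show M+1 ≤ 2*M+1 by omega)]
  have hGM : g M = 0 := by simp [hg]
  have hIco : ∑ j ∈ Finset.Ico (M+1) (2*M+1), g j = ∑ j ∈ Finset.range M, g j := by
    rw [show ∑ j ∈ Finset.range M, g j = ∑ j ∈ Finset.range M, g (2*M - j) from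
      Finset.sum_congr rfl (fun j hj => (hsymm j (by
        have := Finset.mem_range.mp hj; omega)).symm)]
    apply Finset.sum_nbij' (fun j => 2*M - j) (fun j => 2*M - j)
    · intro a ha
      have := Finset.mem_Ico.mp ha
      rw [Finset.mem_range]; omega
    · intro a ha
      have := Finset.mem_range.mp ha
      rw [Finset.mem_Ico]; omega
    · intro a ha
      have := Finset.mem_Ico.mp ha; omega
    · intro a ha
      have := Finset.mem_range.mp ha; omega
    · intro a ha
      have := Finset.mem_Ico.mp ha
      congr 1
      omega
  have : ∑ j ∈ Finset.range (2*M+1), g j = 2 * ∑ j ∈ Finset.range M, g j := by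
    rw [hsplit, hGM, hIco]; ring
  rw [hfull] at this
  linarith [this]

lemma Zsum (M : ℕ) (hM : 2 ≤ M) :
    ∑ k ∈ Finset.Icc 1 M, (-1:ℝ)^(k+1) * (k:ℝ)^2 * ((2*M).choose (M-k) : ℝ) = 0 := by
  set g : ℕ → ℝ := fun j => (-1:ℝ)^j * ((M:ℝ) - j)^2 * ((2*M).choose j : ℝ) with hg
  have key : ∀ k, 1 ≤ k → k ≤ M →
      (-1:ℝ)^(k+1) * (k:ℝ)^2 * ((2*M).choose (M-k) : ℝ) = (-1:ℝ)^(M+1) * g (M - k) := by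
    intro k h1 h2
    simp only [hg]
    rw [neg_one_pow_sub k M h2]
    have hcast : ((M - k : ℕ) : ℝ) = (M:ℝ) - (k:ℝ) := by push_cast [Nat.cast_sub h2]; ring
    rw [hcast]
    have h1' : ((M:ℝ) - ((M:ℝ) - k))^2 = (k:ℝ)^2 := by ring
    rw [h1']
    have hsq : (-1:ℝ)^M * (-1:ℝ)^M = 1 := by
      rw [← pow_add, ← two_mul, pow_mul]; norm_num
    linear_combination ((-1:ℝ)^k * ((k:ℝ)^2 * (((2*M).choose (M-k) : ℕ):ℝ))) * hsq
  rw [Finset.sum_congr rfl (fun k hk => key k (Finset.mem_Icc.mp hk).1 (Finset.mem_Icc.mp hk).2)]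
  rw [← Finset.mul_sum]
  have : ∑ k ∈ Finset.Icc 1 M, g (M - k) = ∑ j ∈ Finset.range M, g j := by
    apply Finset.sum_nbij' (fun k => M - k) (fun j => M - j)
    · intro a ha; have := Finset.mem_Icc.mp ha; rw [Finset.mem_range]; omega
    · intro a ha; have := Finset.mem_range.mp ha; rw [Finset.mem_Icc]; omega
    · intro a ha; have := Finset.mem_Icc.mp ha; omega
    · intro a ha; have := Finset.mem_range.mp ha; omega
    · intro a _; rfl
  rw [this, halfsum M hM, mul_zero]


/-! ### The coefficients b k M -/

noncomputable def b (k M : ℕ) : ℝ := ∏ j ∈ Finset.range k, (((M:ℝ) - j)/((M:ℝ)+j+1))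

lemma abs_b_le_one (k M : ℕ) : |b k M| ≤ 1 := by
  rw [b, Finset.abs_prod]
  apply Finset.prod_le_one
  · intro j _; positivity
  · intro j _
    rw [abs_div]
    have hd : (0:ℝ) < (M:ℝ)+j+1 := by positivity
    rw [abs_of_pos hd, div_le_one hd]
    rw [abs_le]
    constructor <;> nlinarith [Nat.cast_nonneg (α := ℝ) M, Nat.cast_nonneg (α := ℝ) j]

lemma b_tendsto (k : ℕ) : Tendsto (fun M : ℕ => b k M) atTop (𝓝 1) := by
  have main : Tendsto (fun M : ℕ => ∏ j ∈ Finset.range k, (((M:ℝ) - j)/((M:ℝ)+j+1)))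
      atTop (𝓝 (∏ _j ∈ Finset.range k, (1:ℝ))) := by
    apply tendsto_finset_prod
    intro j _
    have hden : Tendsto (fun M : ℕ => ((M:ℝ)+(j:ℝ)+1)) atTop atTop :=
      tendsto_atTop_add_const_right _ _
        (tendsto_atTop_add_const_right _ _ tendsto_natCast_atTop_atTop)
    have hfrac : Tendsto (fun M : ℕ => (2*(j:ℝ)+1)/((M:ℝ)+(j:ℝ)+1)) atTop (𝓝 0) :=
      Tendsto.div_atTop tendsto_const_nhds hden
    have heq : (fun M : ℕ => ((M:ℝ) - j)/((M:ℝ)+j+1))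
        = fun M : ℕ => 1 - (2*(j:ℝ)+1)/((M:ℝ)+(j:ℝ)+1) := by
      funext M
      have hd : ((M:ℝ)+(j:ℝ)+1) ≠ 0 := by positivity
      field_simp
      ring
    rw [heq]
    simpa using (tendsto_const_nhds.sub hfrac)
  simpa [b] using main

lemma b_succ (k M : ℕ) :
    b k (M+1) * (((M:ℝ)+1)^2 - (k:ℝ)^2) = b k M * ((M:ℝ)+1)^2 := by
  induction k with
  | zero => simp [b]
  | succ k ih =>
    have hd1 : ((M:ℝ)+(k:ℝ)+2) ≠ 0 := by positivity
    have hd2 : ((M:ℝ)+(k:ℝ)+1) ≠ 0 := by positivity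
    have e1 : b (k+1) (M+1) * ((M:ℝ)+(k:ℝ)+2) = b k (M+1) * ((M:ℝ)+1-(k:ℝ)) := by
      rw [b, Finset.prod_range_succ, ← b]
      push_cast
      have hd : ((M:ℝ) + 1 + (k:ℝ) + 1) ≠ 0 := by positivity
      rw [mul_assoc, div_mul_eq_mul_div, mul_div_assoc', div_eq_iff hd]
      ring
    have e2 : b (k+1) M * ((M:ℝ)+(k:ℝ)+1) = b k M * ((M:ℝ)-(k:ℝ)) := by
      rw [b, Finset.prod_range_succ, ← b]
      rw [mul_assoc, div_mul_eq_mul_div, mul_div_assoc', div_eq_iff hd2]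
      ring
    have key : (b (k+1) (M+1) * (((M:ℝ)+1)^2 - ((k:ℝ)+1)^2)) * (((M:ℝ)+(k:ℝ)+2) * ((M:ℝ)+(k:ℝ)+1))
        = (b (k+1) M * ((M:ℝ)+1)^2) * (((M:ℝ)+(k:ℝ)+2) * ((M:ℝ)+(k:ℝ)+1)) := by
      linear_combination ((((M:ℝ)+1)^2 - ((k:ℝ)+1)^2) * ((M:ℝ)+(k:ℝ)+1)) * e1
        - (((M:ℝ)+1)^2 * ((M:ℝ)+(k:ℝ)+2)) * e2
        + (((M:ℝ)-(k:ℝ)) * ((M:ℝ)+(k:ℝ)+2)) * ih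
    have := mul_right_cancel₀ (mul_ne_zero hd1 hd2) key
    push_cast
    linear_combination this

lemma b_choose (k M : ℕ) (hk : k ≤ M) :
    b k M * ((2*M).choose M : ℝ) = ((2*M).choose (M-k) : ℝ) := by
  induction k with
  | zero => simp [b]
  | succ k ih =>
    have hk' : k ≤ M := by omega
    have ihh := ih hk'
    have hnat : (2*M).choose (M-k) * (M-k) = (2*M).choose (M-(k+1)) * (M+k+1) := by
      have h := Nat.choose_succ_right_eq (2*M) (M-k-1)
      have e1 : M - k - 1 + 1 = M - k := by omega
      have e2 : 2*M - (M-k-1) = M+k+1 := by omega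
      rw [e1, e2] at h
      have e3 : M - (k+1) = M - k - 1 := by omega
      rw [e3]
      exact h
    have hcast : ((2*M).choose (M-k) : ℝ) * ((M:ℝ)-(k:ℝ))
        = ((2*M).choose (M-(k+1)) : ℝ) * ((M:ℝ)+(k:ℝ)+1) := by
      have := congrArg (Nat.cast : ℕ → ℝ) hnat
      push_cast [Nat.cast_sub hk'] at this
      linarith [this]
    have hd2' : ((M:ℝ)+(k:ℝ)+1) ≠ 0 := by positivity
    have e2 : b (k+1) M * ((M:ℝ)+(k:ℝ)+1) = b k M * ((M:ℝ)-(k:ℝ)) := by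
      rw [b, Finset.prod_range_succ, ← b]
      rw [mul_assoc, div_mul_eq_mul_div, mul_div_assoc', div_eq_iff hd2']
      ring
    have hd2 : ((M:ℝ)+(k:ℝ)+1) ≠ 0 := by positivity
    apply mul_right_cancel₀ hd2
    calc b (k+1) M * ((2*M).choose M : ℝ) * ((M:ℝ)+(k:ℝ)+1)
        = (b (k+1) M * ((M:ℝ)+(k:ℝ)+1)) * ((2*M).choose M : ℝ) := by ring
      _ = (b k M * ((M:ℝ)-(k:ℝ))) * ((2*M).choose M : ℝ) := by rw [e2]
      _ = (b k M * ((2*M).choose M : ℝ)) * ((M:ℝ)-(k:ℝ)) := by ring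
      _ = ((2*M).choose (M-k) : ℝ) * ((M:ℝ)-(k:ℝ)) := by rw [ihh]
      _ = ((2*M).choose (M-(k+1)) : ℝ) * ((M:ℝ)+(k:ℝ)+1) := hcast

lemma b_zero_sum (M : ℕ) (hM : 2 ≤ M) :
    ∑ k ∈ Finset.Icc 1 M, (-1:ℝ)^(k+1) * 2 * (k:ℝ)^2 * b k M = 0 := by
  have hC : (0:ℝ) < ((2*M).choose M : ℝ) := by
    exact_mod_cast Nat.choose_pos (by omega : M ≤ 2*M)
  have : ∑ k ∈ Finset.Icc 1 M, (-1:ℝ)^(k+1) * 2 * (k:ℝ)^2 * b k M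
      = (2 / ((2*M).choose M : ℝ))
        * ∑ k ∈ Finset.Icc 1 M, (-1:ℝ)^(k+1) * (k:ℝ)^2 * ((2*M).choose (M-k) : ℝ) := by
    rw [Finset.mul_sum]
    apply Finset.sum_congr rfl
    intro k hk
    have hkM : k ≤ M := (Finset.mem_Icc.mp hk).2
    rw [← b_choose k M hkM]
    field_simp
  rw [this, Zsum M hM, mul_zero]


noncomputable def A (k M : ℕ) : ℝ := (-1:ℝ)^(k+1) * 2 * (k:ℝ)^2 * b k M

lemma A_succ (k M : ℕ) :
    A k (M+1) * (((M:ℝ)+1)^2 - (k:ℝ)^2) = A k M * ((M:ℝ)+1)^2 := by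
  unfold A
  linear_combination ((-1:ℝ)^(k+1) * 2 * (k:ℝ)^2) * b_succ k M

lemma A_sum_zero (M : ℕ) (hM : 2 ≤ M) : ∑ k ∈ Finset.Icc 1 M, A k M = 0 := by
  have := b_zero_sum M hM
  unfold A
  exact this

lemma A_one_one : A 1 1 = 1 := by
  unfold A b
  simp
  norm_num

section W2

variable {w : ℂ} (hw : ‖w‖ < 1)

include hw

lemma PF : ∀ N : ℕ, 1 ≤ N →
    ∏ k ∈ Finset.Icc 1 N, ((k:ℂ)^2/((k:ℂ)^2 - w))
      = ∑ k ∈ Finset.Icc 1 N, ((A k N : ℝ) : ℂ)/((k:ℂ)^2 - w) := by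
  intro N hN
  induction N, hN using Nat.le_induction with
  | base =>
    rw [show Finset.Icc 1 1 = {1} from rfl]
    rw [Finset.prod_singleton, Finset.sum_singleton, A_one_one]
    norm_num
  | succ N hN ih =>
    have hden1 : ∀ k : ℕ, k ∈ Finset.Icc 1 N → ((k:ℂ)^2 - w) ≠ 0 := fun k hk =>
      den_ne hw k (Finset.mem_Icc.mp hk).1
    have hdenN : (((N+1:ℕ):ℂ)^2 - w) ≠ 0 := den_ne hw (N+1) (by omega)
    rw [Finset.prod_Icc_succ_top (by omega : 1 ≤ N+1), ih, Finset.sum_mul]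
    have hterm : ∀ k ∈ Finset.Icc 1 N,
        ((A k N : ℝ) : ℂ)/((k:ℂ)^2 - w) * (((N+1:ℕ):ℂ)^2/(((N+1:ℕ):ℂ)^2 - w))
          = ((A k (N+1) : ℝ) : ℂ)/((k:ℂ)^2 - w)
            - ((A k (N+1) : ℝ) : ℂ)/(((N+1:ℕ):ℂ)^2 - w) := by
      intro k hk
      obtain ⟨hk1, hkN⟩ := Finset.mem_Icc.mp hk
      have h1 : ((k:ℂ)^2 - w) ≠ 0 := hden1 k hk
      have key : ((A k (N+1) : ℝ) : ℂ) * (((N+1:ℕ):ℂ)^2 - (k:ℂ)^2)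
          = ((A k N : ℝ) : ℂ) * ((N+1:ℕ):ℂ)^2 := by
        have := A_succ k N
        have := congrArg (Complex.ofReal : ℝ → ℂ) this
        push_cast at this ⊢
        linear_combination this
      rw [div_mul_div_comm, div_sub_div _ _ h1 hdenN, div_eq_div_iff
        (mul_ne_zero h1 hdenN) (mul_ne_zero h1 hdenN)]
      linear_combination (-((k:ℂ)^2-w) * (((N+1:ℕ):ℂ)^2 - w)) * key
    rw [Finset.sum_congr rfl hterm, Finset.sum_sub_distrib, ← Finset.sum_div]
    have hzero : ∑ k ∈ Finset.Icc 1 N, ((A k (N+1) : ℝ) : ℂ)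
        = -((A (N+1) (N+1) : ℝ) : ℂ) := by
      have h0 := A_sum_zero (N+1) (by omega)
      rw [Finset.sum_Icc_succ_top (by omega : 1 ≤ N+1)] at h0
      have := congrArg (Complex.ofReal : ℝ → ℂ) h0
      push_cast at this ⊢
      linear_combination this - ((A (N+1) (N+1) : ℝ) : ℂ)
    rw [hzero, Finset.sum_Icc_succ_top (by omega : 1 ≤ N+1)]
    ring

lemma Rform (N : ℕ) (hN : 1 ≤ N) :
    ∏ k ∈ Finset.Icc 1 N, ((k:ℂ)^2/((k:ℂ)^2 - w))
      = 1 + 2*w*∑ k ∈ Finset.Icc 1 N, (-1:ℂ)^(k+1) * ((b k N : ℝ):ℂ)/((k:ℂ)^2 - w) := by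
  have h0 : (1:ℂ) = ∑ k ∈ Finset.Icc 1 N, ((A k N : ℝ) : ℂ)/((k:ℂ)^2) := by
    have hw0 : ‖(0:ℂ)‖ < 1 := by norm_num
    have := PF hw0 N hN
    simp only [sub_zero] at this
    rw [← this]
    rw [Finset.prod_congr rfl (fun k hk => ?_)]
    · rw [Finset.prod_const_one]
    · have hk1 : 1 ≤ k := (Finset.mem_Icc.mp hk).1
      have : ((k:ℂ)^2) ≠ 0 := by
        apply pow_ne_zero
        exact_mod_cast Nat.cast_ne_zero.mpr (by omega)
      rw [div_self this]
  rw [PF hw N hN]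
  have hterm : ∀ k ∈ Finset.Icc 1 N,
      ((A k N : ℝ) : ℂ)/((k:ℂ)^2 - w)
        = ((A k N : ℝ) : ℂ)/((k:ℂ)^2) + 2*w*((-1:ℂ)^(k+1) * ((b k N : ℝ):ℂ)/((k:ℂ)^2 - w)) := by
    intro k hk
    have hk1 : 1 ≤ k := (Finset.mem_Icc.mp hk).1
    have h1 : ((k:ℂ)^2 - w) ≠ 0 := den_ne hw k hk1
    have h2 : ((k:ℂ)^2) ≠ 0 := by
      apply pow_ne_zero
      exact_mod_cast Nat.cast_ne_zero.mpr (by omega)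
    have hA : ((A k N : ℝ) : ℂ) = (-1:ℂ)^(k+1) * 2 * (k:ℂ)^2 * ((b k N : ℝ):ℂ) := by
      unfold A
      push_cast
      ring
    have hk0 : (k:ℂ) ≠ 0 := by exact_mod_cast (by omega : k ≠ 0)
    rw [hA]
    field_simp
    ring
  rw [Finset.sum_congr rfl hterm, Finset.sum_add_distrib, ← h0, ← Finset.mul_sum]

end W2


section W3

variable {w : ℂ} (hw : ‖w‖ < 1)

include hw

lemma norm_fw (a N : ℕ) : ‖(f a N : ℂ) * w^a‖ ≤ 2 * ‖w‖^a := by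
  rw [norm_mul, norm_pow]
  have h1 : ‖(f a N : ℂ)‖ ≤ 2 := by
    rw [Complex.norm_real, Real.norm_eq_abs, abs_of_nonneg (f_nonneg a N)]
    exact f_le_two a N
  nlinarith [norm_nonneg (f a N : ℂ), pow_nonneg (norm_nonneg w) a]

lemma tendsto_prod_LHS :
    Tendsto (fun N : ℕ => ∏ k ∈ Finset.Icc 1 N, ((k:ℂ)^2/((k:ℂ)^2 - w))) atTop
      (𝓝 (∑' a : ℕ, (zetaStar (List.replicate a 2) : ℂ) * w^a)) := by
  have h := tendsto_tsum_of_dominated_convergence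
    (𝓕 := atTop) (f := fun (N a : ℕ) => (f a N : ℂ) * w^a)
    (g := fun a => (zetaStar (List.replicate a 2) : ℂ) * w^a)
    (bound := fun a => 2 * ‖w‖^a)
    (((summable_geometric_of_lt_one (norm_nonneg w) hw)).mul_left 2)
    (fun a => Tendsto.mul_const (w^a)
      ((Complex.continuous_ofReal.tendsto _).comp (tendsto_f a)))
    (Eventually.of_forall (fun N a => norm_fw hw a N))
  exact h.congr (fun N => F_prod hw N)

lemma summable_bound : Summable (fun n : ℕ => 1/((1 - ‖w‖) * ((n:ℝ)+1)^2)) := by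
  have h1 : Summable (fun n : ℕ => 1/((n:ℝ)+1)^2) := by
    have h2 : Summable (fun n : ℕ => 1/((n:ℝ))^2) :=
      (Real.summable_one_div_nat_pow).mpr one_lt_two
    have h3 := (summable_nat_add_iff 1).mpr h2
    apply h3.congr
    intro n
    push_cast
    ring
  have := h1.mul_left (1/(1 - ‖w‖))
  apply this.congr
  intro n
  field_simp

lemma tendsto_prod_RHS :
    Tendsto (fun N : ℕ => ∏ k ∈ Finset.Icc 1 N, ((k:ℂ)^2/((k:ℂ)^2 - w))) atTop
      (𝓝 (1 + 2*w*∑' n : ℕ, (-1:ℂ)^(n+1+1)/((((n+1:ℕ)):ℂ)^2 - w))) := by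
  have hw1 : (0:ℝ) < 1 - ‖w‖ := by linarith
  set T := ∑' n : ℕ, (-1:ℂ)^(n+1+1)/((((n+1:ℕ)):ℂ)^2 - w) with hT
  set fseq : ℕ → ℕ → ℂ := fun N n =>
    if n + 1 ≤ N then (-1:ℂ)^(n+1+1) * ((b (n+1) N : ℝ):ℂ)/((((n+1:ℕ)):ℂ)^2 - w) else 0
    with hfseq
  have hS : Tendsto (fun N => ∑' n : ℕ, fseq N n) atTop (𝓝 T) := by
    apply tendsto_tsum_of_dominated_convergence
      (bound := fun n : ℕ => 1/((1 - ‖w‖) * ((n:ℝ)+1)^2)) (summable_bound hw)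
    · intro n
      have hb : Tendsto (fun N : ℕ => ((b (n+1) N : ℝ):ℂ)) atTop (𝓝 (((1:ℝ):ℂ))) :=
        (Complex.continuous_ofReal.tendsto _).comp (b_tendsto (n+1))
      have hmain : Tendsto (fun N : ℕ =>
          (-1:ℂ)^(n+1+1) * ((b (n+1) N : ℝ):ℂ)/((((n+1:ℕ)):ℂ)^2 - w)) atTop
          (𝓝 ((-1:ℂ)^(n+1+1)/((((n+1:ℕ)):ℂ)^2 - w))) := by
        have := (hb.const_mul ((-1:ℂ)^(n+1+1))).div_const ((((n+1:ℕ)):ℂ)^2 - w)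
        simpa using this
      apply hmain.congr'
      filter_upwards [eventually_ge_atTop (n+1)] with N hN
      rw [hfseq]
      simp only [if_pos hN]
    · apply Eventually.of_forall
      intro N n
      rw [hfseq]
      by_cases h : n + 1 ≤ N
      · simp only [if_pos h]
        rw [norm_div, norm_mul, norm_pow, norm_neg, norm_one, one_pow, one_mul]
        have hden := den_ge hw (n+1) (by omega)
        have hb1 : ‖((b (n+1) N : ℝ):ℂ)‖ ≤ 1 := by
          rw [Complex.norm_real, Real.norm_eq_abs]
          exact abs_b_le_one (n+1) N
        have hdpos : (0:ℝ) < (1 - ‖w‖) * ((n:ℝ)+1)^2 := by positivity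
        have hcast : ((n+1:ℕ):ℝ) = (n:ℝ)+1 := by push_cast; ring
        rw [hcast] at hden
        apply div_le_div₀ (by norm_num) hb1 hdpos hden
      · simp only [if_neg h, norm_zero]
        positivity
  have hrepr : ∀ N : ℕ, (∑' n : ℕ, fseq N n)
      = ∑ k ∈ Finset.Icc 1 N, (-1:ℂ)^(k+1) * ((b k N : ℝ):ℂ)/((k:ℂ)^2 - w) := by
    intro N
    rw [tsum_eq_sum (s := Finset.range N) (by
      intro n hn
      rw [hfseq]
      simp only [Finset.mem_range, not_lt] at hn
      exact if_neg (by omega))]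
    rw [sum_Icc_one (fun k => (-1:ℂ)^(k+1) * ((b k N : ℝ):ℂ)/((k:ℂ)^2 - w)) N]
    apply Finset.sum_congr rfl
    intro n hn
    have hn' : n + 1 ≤ N := Finset.mem_range.mp hn
    rw [hfseq]
    simp only [if_pos hn']
  have hS' : Tendsto (fun N : ℕ =>
      ∑ k ∈ Finset.Icc 1 N, (-1:ℂ)^(k+1) * ((b k N : ℝ):ℂ)/((k:ℂ)^2 - w)) atTop (𝓝 T) :=
    hS.congr hrepr
  have hfinal := (hS'.const_mul (2*w)).const_add 1
  apply hfinal.congr'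
  filter_upwards [eventually_ge_atTop 1] with N hN
  exact (Rform hw N hN).symm

end W3

end Stmt9

theorem stmt9 (z : ℂ) (hz : ‖z‖ < 1) :
    ∑' a : ℕ, (zetaStar (List.replicate a 2) : ℂ) * z ^ (2 * a)
      = 1 - 2 * z ^ 2 * ∑' k : ℕ+, (-1 : ℂ) ^ (k : ℕ) / ((k : ℂ) ^ 2 - z ^ 2) := by
  set w : ℂ := z^2 with hwdef
  have hw : ‖w‖ < 1 := by
    rw [hwdef, norm_pow]
    exact pow_lt_one₀ (norm_nonneg z) hz (by norm_num)
  have h1 : ∑' a : ℕ, (zetaStar (List.replicate a 2) : ℂ) * z ^ (2 * a)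
      = ∑' a : ℕ, (zetaStar (List.replicate a 2) : ℂ) * w ^ a := by
    apply tsum_congr
    intro a
    rw [pow_mul]
  have heq := tendsto_nhds_unique (Stmt9.tendsto_prod_LHS hw) (Stmt9.tendsto_prod_RHS hw)
  rw [h1, heq]
  have hpn : (∑' k : ℕ+, (-1:ℂ)^(k:ℕ)/((k:ℂ)^2 - w))
      = ∑' n : ℕ, (-1:ℂ)^(n+1)/((((n+1:ℕ)):ℂ)^2 - w) := by
    rw [← Equiv.pnatEquivNat.symm.tsum_eq (fun k : ℕ+ => (-1:ℂ)^(k:ℕ)/((k:ℂ)^2 - w))]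
    apply tsum_congr
    intro n
    have hcoe : ((Equiv.pnatEquivNat.symm n : ℕ+) : ℕ) = n+1 := by
      simp [Equiv.pnatEquivNat, Nat.succPNat]
    simp only [hcoe]
  have hT : (∑' n : ℕ, (-1:ℂ)^(n+1+1)/((((n+1:ℕ)):ℂ)^2 - w))
      = - ∑' n : ℕ, (-1:ℂ)^(n+1)/((((n+1:ℕ)):ℂ)^2 - w) := by
    rw [← tsum_neg]
    apply tsum_congr
    intro n
    rw [pow_succ]
    ring
  rw [hT, hpn]
  ring
end
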